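/- arXiv:2103.09577 — 4 statements merged into one kernel-verified Lean document; each statement's English description precedes it below -/
import Mathlib

section
/- For every integer N ≥ 2 and every real 0 < φ ≤ π, there exists a finite set P of unit vectors in ℝ^N that is φ-dense (every unit vector in ℝ^N is at geodesic distance at most φ from some element of P) and whose cardinality satisfies |P| ≤ √(2πN) · (1/sin(φ/2))^(N−1). -/
open Real

/-- Geodesic (great-circle) distance between unit vectors in `ℝ^N`:
the angle `arccos ⟨u, v⟩ ∈ [0, π]`. -/
noncomputable def geodesicDist {N : ℕ} (u v : EuclideanSpace ℝ (Fin N)) : ℝ :=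
  Real.arccos (inner ℝ u v : ℝ)

open MeasureTheory Set

local notation "⟪" x ", " y "⟫" => @inner ℝ _ _ x y

lemma arccos_antitone {x y : ℝ} (hxy : x ≤ y) :
    Real.arccos y ≤ Real.arccos x := by
  unfold Real.arccos
  have := Real.monotone_arcsin hxy
  linarith

lemma arccos_inner_triangle {E : Type*} [NormedAddCommGroup E] [InnerProductSpace ℝ E]
    {u v w : E} (hu : ‖u‖ = 1) (hv : ‖v‖ = 1) (hw : ‖w‖ = 1) :
    Real.arccos ⟪u, w⟫ ≤ Real.arccos ⟪u, v⟫ + Real.arccos ⟪v, w⟫ := by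
  set α := Real.arccos ⟪u, v⟫ with hα
  set β := Real.arccos ⟪v, w⟫ with hβ
  rcases le_or_gt π (α + β) with h | h
  · exact le_trans (Real.arccos_le_pi _) (by linarith)
  have huv : |⟪u, v⟫| ≤ 1 := by
    simpa [hu, hv] using abs_real_inner_le_norm u v
  have hvw : |⟪v, w⟫| ≤ 1 := by
    simpa [hv, hw] using abs_real_inner_le_norm v w
  have hcosα : Real.cos α = ⟪u, v⟫ := Real.cos_arccos (neg_le_of_abs_le huv) (le_of_abs_le huv)
  have hcosβ : Real.cos β = ⟪v, w⟫ := Real.cos_arccos (neg_le_of_abs_le hvw) (le_of_abs_le hvw)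
  have hsinα : Real.sin α = Real.sqrt (1 - ⟪u, v⟫ ^ 2) := Real.sin_arccos _
  have hsinβ : Real.sin β = Real.sqrt (1 - ⟪v, w⟫ ^ 2) := Real.sin_arccos _
  set u' := u - ⟪u, v⟫ • v with hu'
  set w' := w - ⟪v, w⟫ • v with hw'
  have hvv : ⟪v, v⟫ = (1:ℝ) := by rw [real_inner_self_eq_norm_sq, hv]; norm_num
  have huu : ⟪u, u⟫ = (1:ℝ) := by rw [real_inner_self_eq_norm_sq, hu]; norm_num
  have hww : ⟪w, w⟫ = (1:ℝ) := by rw [real_inner_self_eq_norm_sq, hw]; norm_num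
  have hnu' : ‖u'‖ ^ 2 = 1 - ⟪u, v⟫ ^ 2 := by
    rw [← real_inner_self_eq_norm_sq]
    simp only [hu', inner_sub_sub_self, real_inner_smul_left, real_inner_smul_right]
    rw [huu, hvv, real_inner_comm v u]
    ring
  have hnw' : ‖w'‖ ^ 2 = 1 - ⟪v, w⟫ ^ 2 := by
    rw [← real_inner_self_eq_norm_sq]
    simp only [hw', inner_sub_sub_self, real_inner_smul_left, real_inner_smul_right]
    rw [hww, hvv, real_inner_comm v w]
    ring
  have hdecomp : ⟪u, w⟫ = ⟪u, v⟫ * ⟪v, w⟫ + ⟪u', w'⟫ := by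
    simp only [hu', hw', inner_sub_left, inner_sub_right, real_inner_smul_left,
      real_inner_smul_right]
    rw [hvv, real_inner_comm v u]
    ring
  have hlow : ⟪u', w'⟫ ≥ -(‖u'‖ * ‖w'‖) := neg_le_of_abs_le (abs_real_inner_le_norm u' w')
  have hnu'' : ‖u'‖ = Real.sqrt (1 - ⟪u, v⟫ ^ 2) := by
    rw [← hnu', Real.sqrt_sq (norm_nonneg _)]
  have hnw'' : ‖w'‖ = Real.sqrt (1 - ⟪v, w⟫ ^ 2) := by
    rw [← hnw', Real.sqrt_sq (norm_nonneg _)]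
  rw [hnu'', hnw''] at hlow
  have key : Real.cos (α + β) ≤ ⟪u, w⟫ := by
    rw [Real.cos_add, hcosα, hcosβ, hsinα, hsinβ, hdecomp]
    linarith [hlow]
  calc Real.arccos ⟪u, w⟫ ≤ Real.arccos (Real.cos (α + β)) :=
        arccos_antitone key
    _ = α + β := Real.arccos_cos
        (add_nonneg (Real.arccos_nonneg _) (Real.arccos_nonneg _)) h.le

lemma Gamma_add_half_le {x : ℝ} (hx : 0 < x) :
    Real.Gamma (x + 1 / 2) ≤ Real.sqrt x * Real.Gamma x := by
  have hconv := Real.convexOn_log_Gamma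
  have h1 : x ∈ Set.Ioi (0:ℝ) := hx
  have h2 : x + 1 ∈ Set.Ioi (0:ℝ) := by simp; linarith
  have := hconv.2 h1 h2 (by norm_num : (0:ℝ) ≤ 1/2) (by norm_num : (0:ℝ) ≤ 1/2) (by norm_num)
  simp only [smul_eq_mul, Function.comp_apply] at this
  have heq : (1:ℝ)/2 * x + 1/2 * (x + 1) = x + 1/2 := by ring
  rw [heq] at this
  have hΓx : 0 < Real.Gamma x := Real.Gamma_pos_of_pos hx
  have hΓx1 : Real.Gamma (x + 1) = x * Real.Gamma x := Real.Gamma_add_one hx.ne'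
  have hΓh : 0 < Real.Gamma (x + 1/2) := Real.Gamma_pos_of_pos (by linarith)
  have hrhs : 1/2 * Real.log (Real.Gamma x) + 1/2 * Real.log (Real.Gamma (x+1))
      = Real.log (Real.sqrt x * Real.Gamma x) := by
    rw [hΓx1, Real.log_mul (ne_of_gt hx) (ne_of_gt hΓx),
      Real.log_mul (Real.sqrt_ne_zero'.mpr hx) (ne_of_gt hΓx),
      Real.log_sqrt hx.le]
    ring
  rw [hrhs] at this
  have hpos : 0 < Real.sqrt x * Real.Gamma x := by positivity
  exact (Real.log_le_log_iff hΓh hpos).mp this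

noncomputable def rfun (c : ℝ) (s : ℝ) (t : ℝ) : ℝ :=
  if t ≤ c then t * s / c else Real.sqrt (1 - t ^ 2)

noncomputable def gfun (n : ℕ) (c s : ℝ) (t : ℝ) : ℝ :=
  if t ≤ c then (t * s / c) ^ n else (s * (1 - t) / (1 - c)) ^ n

lemma rfun_nonneg {c s : ℝ} (hc : 0 ≤ c) (hs : 0 ≤ s) {t : ℝ} (ht : 0 ≤ t) :
    0 ≤ rfun c s t := by
  unfold rfun
  split_ifs
  · positivity
  · exact Real.sqrt_nonneg _

lemma rfun_measurable (c s : ℝ) : Measurable (rfun c s) := by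
  unfold rfun
  apply Measurable.ite (measurableSet_le measurable_id measurable_const)
  · fun_prop
  · fun_prop

lemma gfun_le_rfun_pow {n : ℕ} {c s : ℝ} (hc : 0 ≤ c) (hc1 : c < 1) (hs : 0 < s)
    (hcs : c ^ 2 + s ^ 2 = 1) {t : ℝ} (ht : t ∈ Icc (0:ℝ) 1) :
    gfun n c s t ≤ rfun c s t ^ n := by
  obtain ⟨ht0, ht1⟩ := ht
  unfold gfun rfun
  split_ifs with h
  · exact le_refl _
  · push_neg at h
    apply pow_le_pow_left₀
    · have h1 : (0:ℝ) ≤ 1 - t := by linarith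
      have h2 : (0:ℝ) < 1 - c := by linarith
      positivity
    · have h1 : (0:ℝ) ≤ 1 - t := by linarith
      have h2 : (0:ℝ) < 1 - c := by linarith
      have hnn : (0:ℝ) ≤ s * (1 - t) / (1 - c) := by positivity
      rw [Real.le_sqrt hnn (by nlinarith : (0:ℝ) ≤ 1 - t ^ 2)]
      rw [div_pow, div_le_iff₀ (by positivity)]
      have key : 0 ≤ (1 - t) * (1 - c) * (t - c) :=
        mul_nonneg (mul_nonneg h1 h2.le) (sub_nonneg.mpr h.le)
      nlinarith [key]


lemma gfun_nonneg {n : ℕ} {c s : ℝ} (hc : 0 ≤ c) (hc1 : c < 1) (hs : 0 ≤ s) {t : ℝ}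
    (ht : t ∈ Icc (0:ℝ) 1) : 0 ≤ gfun n c s t := by
  unfold gfun
  obtain ⟨ht0, ht1⟩ := ht
  split
  · positivity
  · have h1 : (0:ℝ) ≤ 1 - t := by linarith
    have h2 : (0:ℝ) ≤ 1 - c := by linarith
    positivity

lemma gfun_le_one {n : ℕ} {c s : ℝ} (hc : 0 ≤ c) (hc1 : c < 1) (hs : 0 ≤ s) (hs1 : s ≤ 1)
    {t : ℝ} (ht : t ∈ Icc (0:ℝ) 1) : gfun n c s t ≤ 1 := by
  unfold gfun
  obtain ⟨ht0, ht1⟩ := ht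
  split_ifs with h
  · rcases eq_or_lt_of_le hc with rfl | hcpos
    · have : t = 0 := le_antisymm h ht0
      subst this
      simp only [zero_mul, zero_div]
      exact pow_le_one₀ le_rfl zero_le_one
    · have hb : t * s / c ≤ 1 := by
        rw [div_le_one hcpos]
        calc t * s ≤ c * 1 := by
              apply mul_le_mul h hs1 hs hc
        _ = c := by ring
      exact pow_le_one₀ (by positivity) hb
  · push_neg at h
    have hb : s * (1 - t) / (1 - c) ≤ 1 := by
      rw [div_le_one (by linarith)]
      calc s * (1 - t) ≤ 1 * (1 - c) := by
            apply mul_le_mul hs1 (by linarith) (by linarith) zero_le_one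
      _ = 1 - c := by ring
    have hbn : (0:ℝ) ≤ s * (1 - t) / (1 - c) := by
      have h1 : (0:ℝ) ≤ 1 - t := by linarith
      have h2 : (0:ℝ) ≤ 1 - c := by linarith
      positivity
    exact pow_le_one₀ hbn hb

lemma gfun_measurable (n : ℕ) (c s : ℝ) : Measurable (gfun n c s) := by
  unfold gfun
  apply Measurable.ite (measurableSet_le measurable_id measurable_const)
  · exact ((measurable_id.mul_const s).div_const c).pow_const n
  · exact ((measurable_const.mul ((measurable_const.sub measurable_id))).div_const (1-c)).pow_const n

lemma gfun_integral {n : ℕ} {c s : ℝ} (hc : 0 ≤ c) (hc1 : c < 1) (hs : 0 < s) :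
    ∫ t in (0:ℝ)..1, gfun n c s t = s ^ n * c / (n + 1) + s ^ n * (1 - c) / (n + 1) := by
  have hint1 : IntervalIntegrable (gfun n c s) volume 0 c := by
    rw [intervalIntegrable_iff]
    have hcont : Continuous fun t : ℝ => (t * s / c) ^ n := by fun_prop
    refine hcont.integrableOn_uIoc.congr_fun (fun t ht => ?_) measurableSet_uIoc
    rw [Set.uIoc_of_le hc] at ht
    unfold gfun
    rw [if_pos ht.2]
  have hint2 : IntervalIntegrable (gfun n c s) volume c 1 := by
    rw [intervalIntegrable_iff]
    have hcont : Continuous fun t : ℝ => (s * (1 - t) / (1 - c)) ^ n := by fun_prop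
    refine hcont.integrableOn_uIoc.congr_fun (fun t ht => ?_) measurableSet_uIoc
    rw [Set.uIoc_of_le hc1.le] at ht
    unfold gfun
    rw [if_neg (not_le.mpr ht.1)]
  rw [← intervalIntegral.integral_add_adjacent_intervals hint1 hint2]
  have e1 : ∫ t in (0:ℝ)..c, gfun n c s t = s ^ n * c / (n + 1) := by
    rw [intervalIntegral.integral_congr_ae (g := fun t => t ^ n * (s/c) ^ n) ?_]
    · rw [intervalIntegral.integral_mul_const, integral_pow]
      rcases eq_or_lt_of_le hc with rfl | hcpos
      · simp
      · field_simp
        have hcn : c ^ n * c⁻¹ ^ n = 1 := by rw [← mul_pow, mul_inv_cancel₀ hcpos.ne', one_pow]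
        linear_combination (c * s ^ n) * hcn
    · filter_upwards with t ht
      rw [Set.uIoc_of_le hc] at ht
      unfold gfun
      rw [if_pos ht.2, div_pow, mul_pow, div_pow]
      ring
  have e2 : ∫ t in c..(1:ℝ), gfun n c s t = s ^ n * (1 - c) / (n + 1) := by
    rw [intervalIntegral.integral_congr_ae (g := fun t => (1 - t) ^ n * (s/(1-c)) ^ n) ?_]
    · have comp : ∫ t in c..(1:ℝ), (1 - t) ^ n = (1 - c) ^ (n+1) / (n + 1) := by
        have := intervalIntegral.integral_comp_sub_left (a := c) (b := (1:ℝ))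
          (fun u => u ^ n) 1
        rw [this, integral_pow]
        norm_num
      rw [intervalIntegral.integral_mul_const, comp]
      have h1c : (0:ℝ) < 1 - c := by linarith
      field_simp
      have hcn : (1 - c)⁻¹ ^ n * (1 - c) ^ n = 1 := by
        rw [← mul_pow, inv_mul_cancel₀ h1c.ne', one_pow]
      linear_combination (s ^ n - c * s ^ n) * hcn
    · filter_upwards with t ht
      rw [Set.uIoc_of_le hc1.le] at ht
      unfold gfun
      rw [if_neg (not_le.mpr ht.1), div_pow, mul_pow, div_pow]
      ring
  rw [e1, e2]

lemma slice_volume {n : ℕ} (hn : 0 < n) (ρ : ℝ) :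
    volume {y : Fin n → ℝ | Real.sqrt (∑ j, y j ^ 2) ≤ ρ}
      = ENNReal.ofReal ρ ^ n * ENNReal.ofReal (Real.sqrt π ^ n / Real.Gamma (n / 2 + 1)) := by
  have hne : Nonempty (Fin n) := ⟨⟨0, hn⟩⟩
  have hpre : (MeasurableEquiv.toLp 2 (Fin n → ℝ)).symm ⁻¹'
      {y : Fin n → ℝ | Real.sqrt (∑ j, y j ^ 2) ≤ ρ}
      = Metric.closedBall (0 : EuclideanSpace ℝ (Fin n)) ρ := by
    ext u
    simp only [Set.mem_preimage, Set.mem_setOf_eq, Metric.mem_closedBall, dist_zero_right]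
    rw [EuclideanSpace.norm_eq]
    simp only [Real.norm_eq_abs, sq_abs]
    rfl
  have hmeas : MeasurableSet {y : Fin n → ℝ | Real.sqrt (∑ j, y j ^ 2) ≤ ρ} := by
    apply measurableSet_le _ measurable_const
    exact (Real.continuous_sqrt.comp (continuous_finset_sum _ fun j _ => (continuous_apply j).pow 2)).measurable
  calc volume {y : Fin n → ℝ | Real.sqrt (∑ j, y j ^ 2) ≤ ρ}
      = volume ((MeasurableEquiv.toLp 2 (Fin n → ℝ)).symm ⁻¹'
          {y : Fin n → ℝ | Real.sqrt (∑ j, y j ^ 2) ≤ ρ}) :=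
        ((EuclideanSpace.volume_preserving_symm_measurableEquiv_toLp (Fin n)).measure_preimage
          hmeas.nullMeasurableSet).symm
    _ = volume (Metric.closedBall (0 : EuclideanSpace ℝ (Fin n)) ρ) := by rw [hpre]
    _ = _ := by
        rw [EuclideanSpace.volume_closedBall]
        simp [Fintype.card_fin]

lemma W_volume_lower {n : ℕ} (hn : 0 < n) {c s : ℝ} (hc : 0 ≤ c) (hc1 : c < 1) (hs : 0 < s)
    (hs1 : s ≤ 1) (hcs : c ^ 2 + s ^ 2 = 1) :
    ENNReal.ofReal (s ^ n / (n + 1)) * ENNReal.ofReal (Real.sqrt π ^ n / Real.Gamma (n / 2 + 1))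
      ≤ volume {z : ℝ × (Fin n → ℝ) |
          z.1 ∈ Icc (0:ℝ) 1 ∧ Real.sqrt (∑ j, z.2 j ^ 2) ≤ rfun c s z.1} := by
  set κ := ENNReal.ofReal (Real.sqrt π ^ n / Real.Gamma (n / 2 + 1)) with hκ
  set W := {z : ℝ × (Fin n → ℝ) |
      z.1 ∈ Icc (0:ℝ) 1 ∧ Real.sqrt (∑ j, z.2 j ^ 2) ≤ rfun c s z.1} with hW
  have hcont : Continuous fun z : ℝ × (Fin n → ℝ) => Real.sqrt (∑ j, z.2 j ^ 2) := by
    apply Real.continuous_sqrt.comp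
    exact continuous_finset_sum _ fun j _ => ((continuous_apply j).comp continuous_snd).pow 2
  have hWm : MeasurableSet W := by
    apply MeasurableSet.inter
    · exact measurable_fst measurableSet_Icc
    · exact measurableSet_le hcont.measurable ((rfun_measurable c s).comp measurable_fst)
  have hslice : ∀ t : ℝ, volume (Prod.mk t ⁻¹' W)
      = (Icc (0:ℝ) 1).indicator (fun t => ENNReal.ofReal (rfun c s t) ^ n * κ) t := by
    intro t
    by_cases ht : t ∈ Icc (0:ℝ) 1
    · rw [indicator_of_mem ht]
      have : Prod.mk t ⁻¹' W = {y : Fin n → ℝ | Real.sqrt (∑ j, y j ^ 2) ≤ rfun c s t} := by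
        ext y
        simp only [hW, Set.mem_preimage, Set.mem_setOf_eq]
        exact and_iff_right ht
      rw [this, slice_volume hn]
    · rw [indicator_of_notMem ht]
      have : Prod.mk t ⁻¹' W = ∅ := by
        ext y
        simp only [hW, Set.mem_preimage, Set.mem_setOf_eq, Set.mem_empty_iff_false, iff_false,
          not_and]
        exact fun hmem => absurd hmem ht
      rw [this, measure_empty]
  have hvol : volume W = ∫⁻ t in Icc (0:ℝ) 1, ENNReal.ofReal (rfun c s t) ^ n * κ := by
    rw [Measure.volume_eq_prod, Measure.prod_apply hWm]
    rw [← lintegral_indicator measurableSet_Icc]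
    congr 1
    funext t
    exact hslice t
  rw [hvol]
  have hmono : ∫⁻ t in Icc (0:ℝ) 1, ENNReal.ofReal (gfun n c s t) * κ
      ≤ ∫⁻ t in Icc (0:ℝ) 1, ENNReal.ofReal (rfun c s t) ^ n * κ := by
    apply setLIntegral_mono
      (((rfun_measurable c s).ennreal_ofReal.pow_const n).mul_const κ)
    intro t ht
    apply mul_le_mul_left
    rw [← ENNReal.ofReal_pow (rfun_nonneg hc hs.le ht.1)]
    exact ENNReal.ofReal_le_ofReal (gfun_le_rfun_pow hc hc1 hs hcs ht)
  refine le_trans ?_ hmono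
  have hint : Integrable (gfun n c s) (volume.restrict (Icc (0:ℝ) 1)) := by
    constructor
    · exact (gfun_measurable n c s).aestronglyMeasurable
    · apply HasFiniteIntegral.of_bounded (C := (1:ℝ))
      refine (ae_restrict_iff' measurableSet_Icc).mpr (ae_of_all _ fun t ht => ?_)
      rw [Real.norm_eq_abs, abs_of_nonneg (gfun_nonneg hc hc1 hs.le ht)]
      exact gfun_le_one hc hc1 hs.le hs1 ht
  have heq : ∫⁻ t in Icc (0:ℝ) 1, ENNReal.ofReal (gfun n c s t) * κ
      = ENNReal.ofReal (∫ t in Icc (0:ℝ) 1, gfun n c s t) * κ := by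
    rw [lintegral_mul_const _ (gfun_measurable n c s).ennreal_ofReal]
    rw [← ofReal_integral_eq_lintegral_ofReal hint]
    exact (ae_restrict_iff' measurableSet_Icc).mpr (ae_of_all _ fun t ht =>
      gfun_nonneg hc hc1 hs.le ht)
  rw [heq]
  apply mul_le_mul_left
  apply ENNReal.ofReal_le_ofReal
  have : ∫ t in Icc (0:ℝ) 1, gfun n c s t = ∫ t in (0:ℝ)..1, gfun n c s t := by
    rw [intervalIntegral.integral_of_le (by norm_num), integral_Icc_eq_integral_Ioc]
  rw [this, gfun_integral hc hc1 hs]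
  apply le_of_eq
  ring

lemma sector_volume_lower {n : ℕ} (hn : 0 < n) {c s : ℝ} (hc : 0 ≤ c) (hc1 : c < 1)
    (hs : 0 < s) (hs1 : s ≤ 1) (hcs : c ^ 2 + s ^ 2 = 1)
    (p : EuclideanSpace ℝ (Fin (n+1))) (hp : ‖p‖ = 1) :
    ENNReal.ofReal (s ^ n / (n + 1)) * ENNReal.ofReal (Real.sqrt π ^ n / Real.Gamma (n / 2 + 1))
      ≤ volume {x : EuclideanSpace ℝ (Fin (n+1)) |
          ‖x‖ ≤ 1 ∧ c * ‖x‖ ≤ (inner ℝ p x : ℝ)} := by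
  classical
  -- orthonormal basis with `b 0 = p`
  have hcard : Module.finrank ℝ (EuclideanSpace ℝ (Fin (n+1))) = Fintype.card (Fin (n+1)) := by
    simp [finrank_euclideanSpace]
  have horth : Orthonormal ℝ (Set.restrict {(0 : Fin (n+1))} (fun _ => p)) := by
    rw [orthonormal_iff_ite]
    intro i j
    have : i = j := Subsingleton.elim i j
    subst this
    simp only [if_pos rfl, Set.restrict_apply]
    rw [real_inner_self_eq_norm_sq,
      show ‖({0} : Set (Fin (n+1))).restrict (fun _ => p) i‖ = ‖p‖ from rfl, hp]
    norm_num
  obtain ⟨b, hb⟩ := horth.exists_orthonormalBasis_extension_of_card_eq hcard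
  have hbp : b 0 = p := hb 0 rfl
  -- the standard sector
  set T := {u : EuclideanSpace ℝ (Fin (n+1)) | ‖u‖ ≤ 1 ∧ c * ‖u‖ ≤ u 0} with hT
  have hTm : MeasurableSet T := by
    apply MeasurableSet.inter
    · exact measurableSet_le continuous_norm.measurable measurable_const
    · exact measurableSet_le (continuous_norm.measurable.const_mul c)
        (EuclideanSpace.proj (0 : Fin (n+1))).continuous.measurable
  have hpre : b.repr ⁻¹' T = {x : EuclideanSpace ℝ (Fin (n+1)) |
      ‖x‖ ≤ 1 ∧ c * ‖x‖ ≤ (inner ℝ p x : ℝ)} := by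
    ext x
    simp only [Set.mem_preimage, hT, Set.mem_setOf_eq, LinearIsometryEquiv.norm_map]
    rw [b.repr_apply_apply, hbp]
  have hvolT : volume {x : EuclideanSpace ℝ (Fin (n+1)) |
      ‖x‖ ≤ 1 ∧ c * ‖x‖ ≤ (inner ℝ p x : ℝ)} = volume T := by
    rw [← hpre]
    exact b.measurePreserving_repr.measure_preimage hTm.nullMeasurableSet
  rw [hvolT]
  -- transport W into T
  set W := {z : ℝ × (Fin n → ℝ) |
      z.1 ∈ Icc (0:ℝ) 1 ∧ Real.sqrt (∑ j, z.2 j ^ 2) ≤ rfun c s z.1} with hW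
  have hWm : MeasurableSet W := by
    apply MeasurableSet.inter
    · exact measurable_fst measurableSet_Icc
    · refine measurableSet_le ?_ ((rfun_measurable c s).comp measurable_fst)
      apply Continuous.measurable
      exact Real.continuous_sqrt.comp
        (continuous_finset_sum _ fun j _ => ((continuous_apply j).comp continuous_snd).pow 2)
  set ψ := (MeasurableEquiv.toLp 2 (Fin (n+1) → ℝ)).symm with hψ
  set χ := MeasurableEquiv.piFinSuccAbove (fun _ : Fin (n+1) => ℝ) 0 with hχ
  have hmp : MeasurePreserving (χ ∘ ψ) volume volume :=
    (volume_preserving_piFinSuccAbove (fun _ : Fin (n+1) => ℝ) 0).comp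
      (EuclideanSpace.volume_preserving_symm_measurableEquiv_toLp _)
  have hsub : (χ ∘ ψ) ⁻¹' W ⊆ T := by
    intro x hx
    simp only [Set.mem_preimage, hW, Set.mem_setOf_eq, Function.comp_apply] at hx
    obtain ⟨⟨ht0u, ht1u⟩, hSru⟩ := hx
    have ht0 : (0:ℝ) ≤ x 0 := ht0u
    have ht1 : x 0 ≤ 1 := ht1u
    have hSr : Real.sqrt (∑ j : Fin n, x (Fin.succ j) ^ 2) ≤ rfun c s (x 0) := hSru
    clear ht0u ht1u hSru
    set t := x 0 with hde
    set S : ℝ := ∑ j : Fin n, x (Fin.succ j) ^ 2 with hSdef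
    have hSnn : 0 ≤ S := Finset.sum_nonneg fun j _ => sq_nonneg _
    have hnormx : ‖x‖ = Real.sqrt (t ^ 2 + S) := by
      rw [EuclideanSpace.norm_eq]
      congr 1
      rw [Fin.sum_univ_succ (f := fun i => ‖x i‖ ^ 2)]
      simp [Real.norm_eq_abs, sq_abs, hSdef]
      rfl
    have hrt : 0 ≤ rfun c s t := by
      unfold rfun
      split_ifs
      · positivity
      · exact Real.sqrt_nonneg _
    have hS2 : S ≤ rfun c s t ^ 2 := by
      calc S = Real.sqrt S ^ 2 := (Real.sq_sqrt hSnn).symm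
        _ ≤ rfun c s t ^ 2 := by
            apply pow_le_pow_left₀ (Real.sqrt_nonneg _) hSr
    constructor
    · -- ‖x‖ ≤ 1
      rw [hnormx]
      rw [show (1:ℝ) = Real.sqrt 1 by rw [Real.sqrt_one]]
      apply Real.sqrt_le_sqrt
      by_cases h : t ≤ c
      · rcases eq_or_lt_of_le hc with rfl | hcpos
        · have ht' : t = 0 := le_antisymm h ht0
          have hr0 : rfun 0 s t = 0 := by
            unfold rfun
            rw [if_pos h, ht']
            simp
          rw [hr0] at hS2
          nlinarith
        · have hrr : rfun c s t = t * s / c := by unfold rfun; rw [if_pos h]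
          rw [hrr] at hS2
          have h1 : t ^ 2 + S ≤ t ^ 2 / c ^ 2 := by
            rw [div_pow, mul_pow] at hS2
            have : t ^ 2 * s ^ 2 / c ^ 2 = t ^ 2 * (1 - c ^ 2) / c ^ 2 := by
              rw [show s ^ 2 = 1 - c ^ 2 by linarith]
            rw [this] at hS2
            have hc2 : (0:ℝ) < c ^ 2 := by positivity
            calc t ^ 2 + S ≤ t ^ 2 + t ^ 2 * (1 - c ^ 2) / c ^ 2 := by linarith
              _ = t ^ 2 / c ^ 2 := by field_simp; ring
          calc t ^ 2 + S ≤ t ^ 2 / c ^ 2 := h1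
            _ ≤ 1 := by
                rw [div_le_one (by positivity)]
                apply pow_le_pow_left₀ ht0 h
      · have hrr : rfun c s t = Real.sqrt (1 - t ^ 2) := by unfold rfun; rw [if_neg h]
        rw [hrr, Real.sq_sqrt (by nlinarith)] at hS2
        linarith
    · -- c * ‖x‖ ≤ t
      by_cases h : t ≤ c
      · rcases eq_or_lt_of_le hc with rfl | hcpos
        · simpa using ht0
        · have hrr : rfun c s t = t * s / c := by unfold rfun; rw [if_pos h]
          rw [hrr] at hS2
          have hnx : ‖x‖ ≤ t / c := by
            rw [hnormx]
            rw [show t / c = Real.sqrt ((t / c) ^ 2) from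
              (Real.sqrt_sq (by positivity)).symm]
            apply Real.sqrt_le_sqrt
            rw [div_pow, mul_pow] at hS2
            have : t ^ 2 * s ^ 2 / c ^ 2 = t ^ 2 * (1 - c ^ 2) / c ^ 2 := by
              rw [show s ^ 2 = 1 - c ^ 2 by linarith]
            rw [this] at hS2
            have hc2 : (0:ℝ) < c ^ 2 := by positivity
            rw [div_pow]
            calc t ^ 2 + S ≤ t ^ 2 + t ^ 2 * (1 - c ^ 2) / c ^ 2 := by linarith
              _ = t ^ 2 / c ^ 2 := by field_simp; ring
          calc c * ‖x‖ ≤ c * (t / c) := by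
                apply mul_le_mul_of_nonneg_left hnx hc
            _ = t := by field_simp
      · push_neg at h
        have hrr : rfun c s t = Real.sqrt (1 - t ^ 2) := by unfold rfun; rw [if_neg (not_le.mpr h)]
        rw [hrr, Real.sq_sqrt (by nlinarith)] at hS2
        have hnx : ‖x‖ ≤ 1 := by
          rw [hnormx, show (1:ℝ) = Real.sqrt 1 by rw [Real.sqrt_one]]
          apply Real.sqrt_le_sqrt
          linarith
        calc c * ‖x‖ ≤ c * 1 := mul_le_mul_of_nonneg_left hnx hc
          _ = c := by ring
          _ ≤ t := h.le
  calc ENNReal.ofReal (s ^ n / (n + 1)) * ENNReal.ofReal (Real.sqrt π ^ n / Real.Gamma (n/2+1))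
      ≤ volume W := W_volume_lower hn hc hc1 hs hs1 hcs
    _ = volume ((χ ∘ ψ) ⁻¹' W) := (hmp.measure_preimage hWm.nullMeasurableSet).symm
    _ ≤ volume T := measure_mono hsub

lemma packing_card_bound {n : ℕ} (hn : 0 < n) {θ : ℝ} (hθ0 : 0 < θ) (hθ2 : θ ≤ π / 2)
    (P : Finset (EuclideanSpace ℝ (Fin (n+1)))) (hunit : ∀ p ∈ P, ‖p‖ = 1)
    (hsep : ∀ p ∈ P, ∀ q ∈ P, p ≠ q → 2 * θ < Real.arccos ⟪p, q⟫) :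
    (P.card : ℝ) * (Real.sin θ ^ n / (n + 1) * (Real.sqrt π ^ n / Real.Gamma (n / 2 + 1)))
      ≤ Real.sqrt π ^ (n+1) / Real.Gamma ((n+1) / 2 + 1) := by
  classical
  set c := Real.cos θ with hcdef
  set s := Real.sin θ with hsdef
  have hπ : θ < π := lt_of_le_of_lt hθ2 (by linarith [pi_pos])
  have hs : 0 < s := Real.sin_pos_of_pos_of_lt_pi hθ0 hπ
  have hs1 : s ≤ 1 := Real.sin_le_one θ
  have hc : 0 ≤ c := Real.cos_nonneg_of_mem_Icc ⟨by linarith, hθ2⟩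
  have hcs : c ^ 2 + s ^ 2 = 1 := Real.cos_sq_add_sin_sq θ
  have hc1 : c < 1 := by
    nlinarith [Real.cos_le_one θ, hcs, mul_pos hs hs]
  -- sectors
  set F : EuclideanSpace ℝ (Fin (n+1)) → Set (EuclideanSpace ℝ (Fin (n+1))) :=
    fun p => {x | ‖x‖ ≤ 1 ∧ c * ‖x‖ ≤ ⟪p, x⟫} \ {0} with hF
  have hFm : ∀ p, MeasurableSet (F p) := by
    intro p
    apply MeasurableSet.diff _ (measurableSet_singleton 0)
    apply MeasurableSet.inter
    · exact measurableSet_le continuous_norm.measurable measurable_const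
    · apply measurableSet_le (continuous_norm.measurable.const_mul c)
      exact (continuous_const.inner continuous_id).measurable
  have hFvol : ∀ p ∈ P, ENNReal.ofReal (s ^ n / (n + 1))
      * ENNReal.ofReal (Real.sqrt π ^ n / Real.Gamma (n / 2 + 1)) ≤ volume (F p) := by
    intro p hp
    have h0 : volume ({(0:EuclideanSpace ℝ (Fin (n+1)))} : Set _) = 0 := measure_singleton 0
    rw [hF]
    rw [measure_diff_null h0]
    exact sector_volume_lower hn hc hc1 hs hs1 hcs p (hunit p hp)
  have key : ∀ p ∈ P, ∀ x, x ∈ F p → x ≠ 0 → Real.arccos ⟪p, ‖x‖⁻¹ • x⟫ ≤ θ := by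
    intro p hp x hx hx0
    obtain ⟨⟨hx1, hx2⟩, -⟩ := hx
    have hxn : 0 < ‖x‖ := norm_pos_iff.mpr hx0
    have hpu : c ≤ ⟪p, ‖x‖⁻¹ • x⟫ := by
      rw [real_inner_smul_right]
      calc c = ‖x‖⁻¹ * (c * ‖x‖) := by field_simp
        _ ≤ ‖x‖⁻¹ * ⟪p, x⟫ := by
            apply mul_le_mul_of_nonneg_left hx2 (inv_nonneg.mpr (norm_nonneg x))
    calc Real.arccos ⟪p, ‖x‖⁻¹ • x⟫ ≤ Real.arccos c := arccos_antitone hpu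
      _ = θ := by rw [hcdef, Real.arccos_cos hθ0.le hπ.le]
  have hdisj : (P : Set (EuclideanSpace ℝ (Fin (n+1)))).PairwiseDisjoint F := by
    intro p hp q hq hpq
    rw [Function.onFun, Set.disjoint_left]
    intro x hxp hxq
    have hx0 : x ≠ 0 := by
      intro h
      exact hxp.2 (by rw [h]; exact Set.mem_singleton 0)
    have hxn : 0 < ‖x‖ := norm_pos_iff.mpr hx0
    set u := ‖x‖⁻¹ • x with hu
    have hun : ‖u‖ = 1 := norm_smul_inv_norm hx0
    have h1 : Real.arccos ⟪p, u⟫ ≤ θ := key p hp x hxp hx0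
    have h2 : Real.arccos ⟪q, u⟫ ≤ θ := key q hq x hxq hx0
    have h3 : Real.arccos ⟪u, q⟫ ≤ θ := by rwa [real_inner_comm] at h2
    have htri := arccos_inner_triangle (hunit p hp) hun (hunit q hq)
    have := hsep p hp q hq hpq
    linarith
  have hsum : volume (⋃ p ∈ P, F p) = ∑ p ∈ P, volume (F p) :=
    measure_biUnion_finset hdisj (fun p _ => hFm p)
  have hsub : (⋃ p ∈ P, F p) ⊆ Metric.closedBall (0 : EuclideanSpace ℝ (Fin (n+1))) 1 := by
    intro x hx
    rw [Set.mem_iUnion₂] at hx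
    obtain ⟨p, hp, hxp⟩ := hx
    rw [Metric.mem_closedBall, dist_zero_right]
    exact hxp.1.1
  have hcb : volume (Metric.closedBall (0 : EuclideanSpace ℝ (Fin (n+1))) 1)
      = ENNReal.ofReal (Real.sqrt π ^ (n+1) / Real.Gamma ((n+1) / 2 + 1)) := by
    rw [EuclideanSpace.volume_closedBall]
    simp [Fintype.card_fin]
  have hchain : (P.card : ENNReal) * (ENNReal.ofReal (s ^ n / (n + 1))
      * ENNReal.ofReal (Real.sqrt π ^ n / Real.Gamma (n / 2 + 1)))
      ≤ ENNReal.ofReal (Real.sqrt π ^ (n+1) / Real.Gamma ((n+1) / 2 + 1)) := by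
    calc (P.card : ENNReal) * (ENNReal.ofReal (s ^ n / (n + 1))
        * ENNReal.ofReal (Real.sqrt π ^ n / Real.Gamma (n / 2 + 1)))
        = P.card • (ENNReal.ofReal (s ^ n / (n + 1))
          * ENNReal.ofReal (Real.sqrt π ^ n / Real.Gamma (n / 2 + 1))) := by
          rw [nsmul_eq_mul]
      _ ≤ ∑ p ∈ P, volume (F p) := Finset.card_nsmul_le_sum P _ _ hFvol
      _ = volume (⋃ p ∈ P, F p) := hsum.symm
      _ ≤ volume (Metric.closedBall (0 : EuclideanSpace ℝ (Fin (n+1))) 1) := measure_mono hsub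
      _ = _ := hcb
  have hΓ1 : 0 < Real.Gamma ((n:ℝ) / 2 + 1) := Real.Gamma_pos_of_pos (by positivity)
  have hΓ2 : 0 < Real.Gamma (((n:ℝ)+1) / 2 + 1) := Real.Gamma_pos_of_pos (by positivity)
  have hB : (0:ℝ) ≤ Real.sqrt π ^ (n+1) / Real.Gamma ((n+1) / 2 + 1) := by positivity
  have hA : (0:ℝ) ≤ s ^ n / (n + 1) * (Real.sqrt π ^ n / Real.Gamma (n / 2 + 1)) := by positivity
  have := ENNReal.toReal_mono (by exact ENNReal.ofReal_ne_top) hchain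
  rw [ENNReal.toReal_mul, ENNReal.toReal_mul, ENNReal.toReal_natCast,
    ENNReal.toReal_ofReal (by positivity), ENNReal.toReal_ofReal (by positivity),
    ENNReal.toReal_ofReal hB] at this
  exact this

lemma bound_arith {n : ℕ} {s M : ℝ} (hs : 0 < s)
    (hM : M * (s ^ n / (n + 1) * (Real.sqrt π ^ n / Real.Gamma (n / 2 + 1)))
      ≤ Real.sqrt π ^ (n+1) / Real.Gamma ((n+1) / 2 + 1)) :
    M ≤ Real.sqrt (2 * π * (n+1)) * (1 / s) ^ n := by
  set x : ℝ := ((n:ℝ)+1)/2 with hxdef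
  have hx : 0 < x := by positivity
  have hΓx : 0 < Real.Gamma x := Real.Gamma_pos_of_pos hx
  have hG : 0 < Real.Gamma (x + 1/2) := Real.Gamma_pos_of_pos (by linarith)
  have hg := Gamma_add_half_le hx
  have hsx : 0 < Real.sqrt x := Real.sqrt_pos.mpr hx
  have hsπ : 0 < Real.sqrt π := Real.sqrt_pos.mpr pi_pos
  have e1 : (n:ℝ)/2 + 1 = x + 1/2 := by rw [hxdef]; ring
  have e2 : ((n:ℝ)+1)/2 + 1 = x + 1 := by rw [hxdef]
  rw [e1, e2, Real.Gamma_add_one hx.ne'] at hM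
  have h3 : (n:ℝ)+1 = 2*x := by rw [hxdef]; ring
  have h4 : (1/s)^n * s^n = 1 := by
    rw [one_div, inv_pow, inv_mul_cancel₀ (pow_ne_zero n hs.ne')]
  have h5 : Real.sqrt x * Real.sqrt x = x := Real.mul_self_sqrt hx.le
  have h2 : Real.sqrt (2*π*((n:ℝ)+1)) = 2*Real.sqrt π*Real.sqrt x := by
    rw [show 2*π*((n:ℝ)+1) = (2*Real.sqrt π*Real.sqrt x)^2 by
      rw [mul_pow, mul_pow, Real.sq_sqrt pi_pos.le, Real.sq_sqrt hx.le, h3]; ring]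
    exact Real.sqrt_sq (by positivity)
  have key : Real.sqrt π ^ (n+1) / (x * Real.Gamma x)
      ≤ Real.sqrt (2*π*((n:ℝ)+1)) * (1/s)^n
          * (s ^ n / ((n:ℝ) + 1) * (Real.sqrt π ^ n / Real.Gamma (x + 1/2))) := by
    have step1 : Real.sqrt π ^ (n+1) / (x * Real.Gamma x)
        = Real.sqrt (2*π*((n:ℝ)+1)) * (1/s)^n
            * (s ^ n / ((n:ℝ) + 1) * (Real.sqrt π ^ n / (Real.sqrt x * Real.Gamma x))) := by
      rw [h2, h3]
      have hss : s ^ n ≠ 0 := pow_ne_zero n hs.ne'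
      field_simp
      have hsn : s ^ n * s⁻¹ ^ n = 1 := by rw [← mul_pow, mul_inv_cancel₀ hs.ne', one_pow]
      linear_combination (-(Real.sqrt π * Real.sqrt π ^ n)) * hsn
    rw [step1]
    apply mul_le_mul_of_nonneg_left _ (by positivity)
    apply mul_le_mul_of_nonneg_left _ (by positivity)
    exact div_le_div_of_nonneg_left (by positivity) hG hg
  have hA : 0 < s ^ n / ((n:ℝ) + 1) * (Real.sqrt π ^ n / Real.Gamma (x + 1/2)) := by positivity
  have := hM.trans key
  exact (mul_le_mul_iff_left₀ hA).mp this

theorem exists_dense_set_with_card_bound (N : ℕ) (hN : 2 ≤ N) (φ : ℝ) (hφ : 0 < φ)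
    (hφπ : φ ≤ π) :
    ∃ P : Finset (EuclideanSpace ℝ (Fin N)),
      (∀ p ∈ P, ‖p‖ = 1) ∧
      (∀ v : EuclideanSpace ℝ (Fin N), ‖v‖ = 1 → ∃ p ∈ P, geodesicDist v p ≤ φ) ∧
      (P.card : ℝ) ≤ Real.sqrt (2 * π * N) * (1 / Real.sin (φ / 2)) ^ (N - 1) := by
  obtain ⟨n, rfl⟩ : ∃ n, N = n + 1 := ⟨N - 1, by omega⟩
  have hn : 0 < n := by omega
  have hθ0 : 0 < φ / 2 := by positivity
  have hθ2 : φ / 2 ≤ π / 2 := by linarith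
  have hs : 0 < Real.sin (φ / 2) :=
    Real.sin_pos_of_pos_of_lt_pi hθ0 (by linarith [pi_pos])
  classical
  set Sep : Finset (EuclideanSpace ℝ (Fin (n+1))) → Prop := fun Q =>
    (∀ p ∈ Q, ‖p‖ = 1) ∧ ∀ p ∈ Q, ∀ q ∈ Q, p ≠ q → φ < geodesicDist p q with hSep
  have hbound : ∀ Q : Finset (EuclideanSpace ℝ (Fin (n+1))), Sep Q →
      (Q.card : ℝ) ≤ Real.sqrt (2 * π * (n+1)) * (1 / Real.sin (φ / 2)) ^ n := by
    intro Q hQ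
    apply bound_arith hs
    apply packing_card_bound hn hθ0 hθ2 Q hQ.1
    intro p hp q hq hpq
    have h1 := hQ.2 p hp q hq hpq
    have h2 : geodesicDist p q = Real.arccos (inner ℝ p q : ℝ) := rfl
    rw [h2] at h1
    linarith
  have hbN : ∀ Q : Finset (EuclideanSpace ℝ (Fin (n+1))), Sep Q →
      Q.card ≤ Nat.floor (Real.sqrt (2 * π * (n+1)) * (1 / Real.sin (φ / 2)) ^ n) :=
    fun Q hQ => Nat.le_floor (hbound Q hQ)
  set K := {k : ℕ | ∃ Q : Finset (EuclideanSpace ℝ (Fin (n+1))), Sep Q ∧ Q.card = k} with hK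
  have h0K : 0 ∈ K := ⟨∅, ⟨by simp, by simp⟩, rfl⟩
  have hKb : BddAbove K := by
    refine ⟨Nat.floor (Real.sqrt (2 * π * (n+1)) * (1 / Real.sin (φ / 2)) ^ n), ?_⟩
    rintro k ⟨Q, hQ, rfl⟩
    exact hbN Q hQ
  have hmem : sSup K ∈ K := Nat.sSup_mem ⟨0, h0K⟩ hKb
  obtain ⟨P, hPsep, hPcard⟩ := hmem
  refine ⟨P, hPsep.1, ?_, ?_⟩
  · intro v hv
    by_contra hcon
    push_neg at hcon
    have hcon' : ∀ p ∈ P, φ < geodesicDist v p := hcon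
    have hvP : v ∉ P := by
      intro hvmem
      have h1 := hcon' v hvmem
      have h2 : geodesicDist v v = 0 := by
        have : (inner ℝ v v : ℝ) = 1 := by
          rw [real_inner_self_eq_norm_sq, hv]; norm_num
        show Real.arccos (inner ℝ v v : ℝ) = 0
        rw [this, Real.arccos_one]
      rw [h2] at h1
      linarith
    have hsymm : ∀ p : EuclideanSpace ℝ (Fin (n+1)), geodesicDist p v = geodesicDist v p := by
      intro p
      show Real.arccos (inner ℝ p v : ℝ) = Real.arccos (inner ℝ v p : ℝ)
      rw [real_inner_comm]
    have hSep' : Sep (insert v P) := by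
      constructor
      · intro p hp
        rcases Finset.mem_insert.mp hp with rfl | hp'
        · exact hv
        · exact hPsep.1 p hp'
      · intro p hp q hq hpq
        rcases Finset.mem_insert.mp hp with rfl | hp' <;>
          rcases Finset.mem_insert.mp hq with rfl | hq'
        · exact absurd rfl hpq
        · exact hcon' q hq'
        · rw [hsymm]
          exact hcon' p hp'
        · exact hPsep.2 p hp' q hq' hpq
    have hmem' : P.card + 1 ∈ K :=
      ⟨insert v P, hSep', by rw [Finset.card_insert_of_notMem hvP]⟩
    have hle := le_csSup hKb hmem'
    omega
  · have h1 := hbound P hPsep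
    have hcast : ((n+1 : ℕ) : ℝ) = (n:ℝ) + 1 := by push_cast; ring
    have h2 : n + 1 - 1 = n := rfl
    rw [h2, hcast]
    exact h1
end

section
/- Let x, p, q be points in the Euclidean plane ℝ² with x ≠ p, x ≠ q, p ≠ q. Let l, d, α be real numbers with 0 < l, l ≤ dist(p,q), dist(x,q) ≤ d, and 0 < α ≤ π/2, and suppose the angle of the triangle at p satisfies α ≤ ∠xpq ≤ π − α. Then the angle at x (the angular span of the segment pq as seen from x) satisfies sin(∠pxq) ≥ (l/d)·sin(α). -/
open Real EuclideanGeometry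

theorem angular_span_law_of_sines (x p q : EuclideanSpace ℝ (Fin 2))
    (hxp : x ≠ p) (hxq : x ≠ q) (hpq : p ≠ q)
    (l d α : ℝ) (hl : 0 < l) (hlpq : l ≤ dist p q) (hxqd : dist x q ≤ d)
    (hα : 0 < α) (hαπ : α ≤ π / 2)
    (hangle1 : α ≤ ∠ x p q) (hangle2 : ∠ x p q ≤ π - α) :
    Real.sin (∠ p x q) ≥ (l / d) * Real.sin α := by
  have hdxq : 0 < dist x q := dist_pos.mpr hxq
  have hdxp : 0 < dist x p := dist_pos.mpr hxp
  have hdpq : 0 < dist p q := dist_pos.mpr hpq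
  have hd : 0 < d := lt_of_lt_of_le hdxq hxqd
  -- law of sines
  have hlaw : Real.sin (∠ p x q) * (dist x p * dist x q)
      = Real.sin (∠ x p q) * (dist x p * dist p q) := by
    have h1 := InnerProductGeometry.sin_angle_mul_norm_mul_norm (p - x) (q - x)
    have h2 := InnerProductGeometry.sin_angle_mul_norm_mul_norm (x - p) (q - p)
    have hx1 : ∠ p x q = InnerProductGeometry.angle (p - x) (q - x) := rfl
    have hx2 : ∠ x p q = InnerProductGeometry.angle (x - p) (q - p) := rfl
    have hsame : (inner ℝ (p - x) (p - x) : ℝ) * inner ℝ (q - x) (q - x)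
          - (inner ℝ (p - x) (q - x) : ℝ) * inner ℝ (p - x) (q - x)
        = (inner ℝ (x - p) (x - p) : ℝ) * inner ℝ (q - p) (q - p)
          - (inner ℝ (x - p) (q - p) : ℝ) * inner ℝ (x - p) (q - p) := by
      obtain ⟨a, b, ha, hb⟩ : ∃ a b, x - p = a ∧ q - p = b := ⟨_, _, rfl, rfl⟩
      have e1 : p - x = -a := by rw [← ha]; abel
      have e2 : q - x = b - a := by rw [← ha, ← hb]; abel
      rw [e1, e2, ha, hb]
      simp only [inner_sub_left, inner_sub_right, inner_neg_left, inner_neg_right,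
        real_inner_comm b a]
      ring
    have hlaw' : Real.sin (∠ p x q) * (‖p - x‖ * ‖q - x‖)
        = Real.sin (∠ x p q) * (‖x - p‖ * ‖q - p‖) := by
      rw [hx1, hx2, h1, h2, hsame]
    rw [norm_sub_rev p x, norm_sub_rev q x, norm_sub_rev q p] at hlaw'
    simpa [dist_eq_norm] using hlaw'
  have hc : Real.sin (∠ p x q) * dist x q = Real.sin (∠ x p q) * dist p q := by
    apply mul_left_cancel₀ hdxp.ne'
    linear_combination hlaw
  have hsinp : Real.sin α ≤ Real.sin (∠ x p q) := by
    rcases le_or_gt (∠ x p q) (π / 2) with h | h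
    · exact Real.sin_le_sin_of_le_of_le_pi_div_two (by linarith [Real.pi_pos]) h hangle1
    · have hrw : Real.sin (∠ x p q) = Real.sin (π - ∠ x p q) := (Real.sin_pi_sub _).symm
      rw [hrw]
      exact Real.sin_le_sin_of_le_of_le_pi_div_two (by linarith [Real.pi_pos]) (by linarith)
        (by linarith)
  have hsinα : 0 < Real.sin α := Real.sin_pos_of_pos_of_lt_pi hα
    (lt_of_le_of_lt hαπ (by linarith [Real.pi_pos]))
  have hkey : Real.sin (∠ p x q) = Real.sin (∠ x p q) * (dist p q / dist x q) := by
    field_simp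
    linarith [hc]
  rw [hkey]
  have hratio : l / d ≤ dist p q / dist x q :=
    div_le_div₀ hdpq.le hlpq hdxq hxqd
  calc (l / d) * Real.sin α ≤ (dist p q / dist x q) * Real.sin α :=
        mul_le_mul_of_nonneg_right hratio hsinα.le
    _ ≤ (dist p q / dist x q) * Real.sin (∠ x p q) :=
        mul_le_mul_of_nonneg_left hsinp (by positivity)
    _ = Real.sin (∠ x p q) * (dist p q / dist x q) := by ring
end

section
/- Let N ≥ 3 be an integer and let θ be a real number with 0 < θ ≤ π/2. Let P be a finite set of unit vectors in ℝ^N that is (θ/6)-dense, i.e., every unit vector in ℝ^N is at geodesic distance at most θ/6 from some element of P. Then for every unit vector v ∈ ℝ^N, the number of elements p ∈ P with ∠(v,p) ≤ θ/2 is at least N. -/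
open Real
open scoped Classical

section Aux

variable {N : ℕ}

lemma abs_inner_le_one' {u v : EuclideanSpace ℝ (Fin N)} (hu : ‖u‖ = 1) (hv : ‖v‖ = 1) :
    |(inner ℝ u v : ℝ)| ≤ 1 := by
  have := abs_real_inner_le_norm u v
  rwa [hu, hv, mul_one] at this

lemma geodesicDist_comm (u v : EuclideanSpace ℝ (Fin N)) :
    geodesicDist u v = geodesicDist v u := by
  unfold geodesicDist; rw [real_inner_comm]

lemma norm_residual {N : ℕ} {u v : EuclideanSpace ℝ (Fin N)} (hu : ‖u‖ = 1) (hv : ‖v‖ = 1) :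
    ‖u - (inner ℝ u v : ℝ) • v‖ = Real.sin (geodesicDist u v) := by
  have h1 : (inner ℝ u u : ℝ) = 1 := by
    rw [real_inner_self_eq_norm_sq, hu]; norm_num
  have h2 : (inner ℝ v v : ℝ) = 1 := by
    rw [real_inner_self_eq_norm_sq, hv]; norm_num
  have h3 : (inner ℝ v u : ℝ) = (inner ℝ u v : ℝ) := real_inner_comm u v
  have hsq : ‖u - (inner ℝ u v : ℝ) • v‖ ^ 2 = 1 - (inner ℝ u v : ℝ) ^ 2 := by
    rw [← real_inner_self_eq_norm_sq]
    simp only [inner_sub_left, inner_sub_right, real_inner_smul_left, real_inner_smul_right,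
      h1, h2, h3]
    ring
  rw [geodesicDist, Real.sin_arccos, ← hsq, Real.sqrt_sq (norm_nonneg _)]

/-- Spherical triangle inequality for unit vectors. -/
lemma geodesicDist_triangle {N : ℕ} {u v w : EuclideanSpace ℝ (Fin N)}
    (hu : ‖u‖ = 1) (hv : ‖v‖ = 1) (hw : ‖w‖ = 1) :
    geodesicDist u w ≤ geodesicDist u v + geodesicDist v w := by
  have hA0 : 0 ≤ geodesicDist u v := Real.arccos_nonneg _
  have hB0 : 0 ≤ geodesicDist v w := Real.arccos_nonneg _
  have haa := abs_le.mp (abs_inner_le_one' hu hv)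
  have hbb := abs_le.mp (abs_inner_le_one' hv hw)
  have hcc := abs_le.mp (abs_inner_le_one' hu hw)
  by_cases hπ : π ≤ geodesicDist u v + geodesicDist v w
  · exact le_trans (Real.arccos_le_pi _) hπ
  push_neg at hπ
  -- key inequality: cos (A + B) ≤ ⟪u, w⟫
  have hkey : Real.cos (geodesicDist u v + geodesicDist v w) ≤ (inner ℝ u w : ℝ) := by
    rw [Real.cos_add]
    have hcosA : Real.cos (geodesicDist u v) = (inner ℝ u v : ℝ) :=
      Real.cos_arccos haa.1 haa.2
    have hcosB : Real.cos (geodesicDist v w) = (inner ℝ v w : ℝ) :=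
      Real.cos_arccos hbb.1 hbb.2
    have hsinA : Real.sin (geodesicDist u v) = ‖u - (inner ℝ u v : ℝ) • v‖ :=
      (norm_residual hu hv).symm
    have hsinB : Real.sin (geodesicDist v w) = ‖w - (inner ℝ v w : ℝ) • v‖ := by
      rw [geodesicDist_comm, real_inner_comm w v]
      exact (norm_residual hw hv).symm
    have h2 : (inner ℝ v v : ℝ) = 1 := by
      rw [real_inner_self_eq_norm_sq, hv]; norm_num
    have h3 : (inner ℝ v u : ℝ) = (inner ℝ u v : ℝ) := real_inner_comm u v
    have h4 : (inner ℝ w v : ℝ) = (inner ℝ v w : ℝ) := real_inner_comm v w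
    have hinner : (inner ℝ (u - (inner ℝ u v : ℝ) • v) (w - (inner ℝ v w : ℝ) • v) : ℝ) =
        (inner ℝ u w : ℝ) - (inner ℝ u v : ℝ) * (inner ℝ v w : ℝ) := by
      simp only [inner_sub_left, inner_sub_right, real_inner_smul_left, real_inner_smul_right,
        h2, h3, h4]
      ring
    have hCS : -(‖u - (inner ℝ u v : ℝ) • v‖ * ‖w - (inner ℝ v w : ℝ) • v‖) ≤
        (inner ℝ (u - (inner ℝ u v : ℝ) • v) (w - (inner ℝ v w : ℝ) • v) : ℝ) :=
      neg_le_of_abs_le (abs_real_inner_le_norm _ _)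
    rw [hinner] at hCS
    rw [hcosA, hcosB, hsinA, hsinB]
    linarith
  by_contra hlt
  push_neg at hlt
  have h5 := Real.cos_lt_cos_of_nonneg_of_le_pi (by linarith) (Real.arccos_le_pi _) hlt
  rw [Real.cos_arccos hcc.1 hcc.2] at h5
  linarith

end Aux

theorem cap_contains_at_least_N_directions (N : ℕ) (hN : 3 ≤ N)
    (θ : ℝ) (hθ : 0 < θ) (hθ2 : θ ≤ π / 2)
    (P : Finset (EuclideanSpace ℝ (Fin N)))
    (hunit : ∀ p ∈ P, ‖p‖ = 1)
    (hdense : ∀ v : EuclideanSpace ℝ (Fin N), ‖v‖ = 1 →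
      ∃ p ∈ P, geodesicDist v p ≤ θ / 6)
    (v : EuclideanSpace ℝ (Fin N)) (hv : ‖v‖ = 1) :
    N ≤ (P.filter (fun p => geodesicDist v p ≤ θ / 2)).card := by
  classical
  have hv0 : v ≠ 0 := by
    intro h; rw [h, norm_zero] at hv; norm_num at hv
  have hfact : Fact (Module.finrank ℝ (EuclideanSpace ℝ (Fin N)) = (N - 1) + 1) :=
    ⟨by rw [finrank_euclideanSpace_fin]; omega⟩
  let b := OrthonormalBasis.fromOrthogonalSpanSingleton (𝕜 := ℝ) (N - 1) hv0
  have hb_norm : ∀ k, ‖((b k : (ℝ ∙ v)ᗮ) : EuclideanSpace ℝ (Fin N))‖ = 1 := fun k =>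
    b.orthonormal.1 k
  have hb_inner : ∀ k l, k ≠ l →
      (inner ℝ ((b k : (ℝ ∙ v)ᗮ) : EuclideanSpace ℝ (Fin N))
        ((b l : (ℝ ∙ v)ᗮ) : EuclideanSpace ℝ (Fin N)) : ℝ) = 0 := fun k l hkl =>
    b.orthonormal.2 hkl
  have hvb : ∀ k, (inner ℝ v ((b k : (ℝ ∙ v)ᗮ) : EuclideanSpace ℝ (Fin N)) : ℝ) = 0 := by
    intro k
    have hmem : ((b k : (ℝ ∙ v)ᗮ) : EuclideanSpace ℝ (Fin N)) ∈ (ℝ ∙ v)ᗮ := (b k).2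
    exact (Submodule.mem_orthogonal _ _).mp hmem v (Submodule.mem_span_singleton_self v)
  have h0lt : 0 < N - 1 := by omega
  -- family of N unit vectors orthogonal to v with pairwise nonpositive inner products
  set s : Fin N → EuclideanSpace ℝ (Fin N) := fun i =>
    if h : (i : ℕ) < N - 1 then ((b ⟨i, h⟩ : (ℝ ∙ v)ᗮ) : EuclideanSpace ℝ (Fin N))
    else -((b ⟨0, h0lt⟩ : (ℝ ∙ v)ᗮ) : EuclideanSpace ℝ (Fin N)) with hs
  have hs_norm : ∀ i, ‖s i‖ = 1 := by
    intro i; rw [hs]; dsimp only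
    split
    · exact hb_norm _
    · rw [norm_neg]; exact hb_norm _
  have hs_orth : ∀ i, (inner ℝ v (s i) : ℝ) = 0 := by
    intro i; rw [hs]; dsimp only
    split
    · exact hvb _
    · rw [inner_neg_right, hvb, neg_zero]
  have hs_inner : ∀ i j : Fin N, i ≠ j → (inner ℝ (s i) (s j) : ℝ) ≤ 0 := by
    intro i j hij
    rw [hs]; dsimp only
    have hbnn : ∀ k l : Fin (N - 1),
        (0 : ℝ) ≤ (inner ℝ ((b k : (ℝ ∙ v)ᗮ) : EuclideanSpace ℝ (Fin N))
          ((b l : (ℝ ∙ v)ᗮ) : EuclideanSpace ℝ (Fin N)) : ℝ) := by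
      intro k l
      by_cases hkl : k = l
      · subst hkl
        rw [real_inner_self_eq_norm_sq, hb_norm]
        norm_num
      · rw [hb_inner k l hkl]
    by_cases hi : (i : ℕ) < N - 1 <;> by_cases hj : (j : ℕ) < N - 1
    · rw [dif_pos hi, dif_pos hj]
      have : (⟨(i : ℕ), hi⟩ : Fin (N - 1)) ≠ ⟨(j : ℕ), hj⟩ := by
        intro h
        apply hij
        have := congrArg Fin.val h
        exact Fin.ext this
      rw [hb_inner _ _ this]
    · rw [dif_pos hi, dif_neg hj, inner_neg_right, neg_nonpos]
      exact hbnn _ _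
    · rw [dif_neg hi, dif_pos hj, inner_neg_left, neg_nonpos]
      exact hbnn _ _
    · exfalso
      apply hij
      apply Fin.ext
      have h1 : (i : ℕ) ≤ N - 1 := by omega
      have h2 : (j : ℕ) ≤ N - 1 := by omega
      omega
  -- the perturbed directions
  set α : ℝ := θ / 3 with hαdef
  have hα0 : 0 < α := by positivity
  have hαle : α ≤ π / 6 := by rw [hαdef]; linarith
  have hπpos : 0 < π := Real.pi_pos
  have hαπ : α ≤ π := by linarith
  have hcosα_pos : 0 < Real.cos α :=
    Real.cos_pos_of_mem_Ioo ⟨by linarith, by linarith⟩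
  have hcosα_lt : Real.cos α < 1 := by
    have h := Real.cos_lt_cos_of_nonneg_of_le_pi le_rfl hαπ hα0
    simpa using h
  set w : Fin N → EuclideanSpace ℝ (Fin N) := fun i =>
    Real.cos α • v + Real.sin α • s i with hw
  have hinner_vv : (inner ℝ v v : ℝ) = 1 := by
    rw [real_inner_self_eq_norm_sq, hv]; norm_num
  have hinner_ss : ∀ i, (inner ℝ (s i) (s i) : ℝ) = 1 := by
    intro i; rw [real_inner_self_eq_norm_sq, hs_norm]; norm_num
  have hs_orth' : ∀ i, (inner ℝ (s i) v : ℝ) = 0 := by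
    intro i; rw [real_inner_comm]; exact hs_orth i
  have hw_norm : ∀ i, ‖w i‖ = 1 := by
    intro i
    have hsq : ‖w i‖ ^ 2 = 1 := by
      rw [← real_inner_self_eq_norm_sq, hw]
      dsimp only
      simp only [inner_add_left, inner_add_right, real_inner_smul_left, real_inner_smul_right,
        hinner_vv, hinner_ss, hs_orth, hs_orth']
      linear_combination Real.sin_sq_add_cos_sq α
    have h1 : (‖w i‖ - 1) * (‖w i‖ + 1) = 0 := by ring_nf; nlinarith
    rcases mul_eq_zero.mp h1 with h | h
    · linarith
    · have := norm_nonneg (w i); linarith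
  have hw_inner_v : ∀ i, (inner ℝ v (w i) : ℝ) = Real.cos α := by
    intro i
    rw [hw]; dsimp only
    simp only [inner_add_right, real_inner_smul_right, hinner_vv, hs_orth]
    ring
  have hdist_vw : ∀ i, geodesicDist v (w i) = α := by
    intro i
    rw [geodesicDist, hw_inner_v, Real.arccos_cos (le_of_lt hα0) hαπ]
  have hw_far : ∀ i j : Fin N, i ≠ j → α < geodesicDist (w i) (w j) := by
    intro i j hij
    have hinner_ww : (inner ℝ (w i) (w j) : ℝ) =
        Real.cos α ^ 2 + Real.sin α ^ 2 * (inner ℝ (s i) (s j) : ℝ) := by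
      rw [hw]; dsimp only
      simp only [inner_add_left, inner_add_right, real_inner_smul_left, real_inner_smul_right,
        hinner_vv, hs_orth, hs_orth']
      ring
    have hle : (inner ℝ (w i) (w j) : ℝ) < Real.cos α := by
      rw [hinner_ww]
      have h1 : Real.sin α ^ 2 * (inner ℝ (s i) (s j) : ℝ) ≤ 0 :=
        mul_nonpos_of_nonneg_of_nonpos (sq_nonneg _) (hs_inner i j hij)
      nlinarith
    by_contra hcon
    push_neg at hcon
    -- arccos ⟪w i, w j⟫ ≤ α, so cos α ≤ ⟪w i, w j⟫
    rw [geodesicDist] at hcon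
    have hbd := abs_le.mp (abs_inner_le_one' (hw_norm i) (hw_norm j))
    have h2 : Real.cos α ≤ Real.cos (Real.arccos (inner ℝ (w i) (w j) : ℝ)) :=
      Real.cos_le_cos_of_nonneg_of_le_pi (Real.arccos_nonneg _) hαπ hcon
    rw [Real.cos_arccos hbd.1 hbd.2] at h2
    linarith
  -- pick a dense point near each w i
  have hchoice : ∀ i : Fin N, ∃ p ∈ P, geodesicDist (w i) p ≤ θ / 6 := fun i =>
    hdense (w i) (hw_norm i)
  choose f hfP hfd using hchoice
  have hf_mem : ∀ i, f i ∈ P.filter (fun p => geodesicDist v p ≤ θ / 2) := by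
    intro i
    rw [Finset.mem_filter]
    refine ⟨hfP i, ?_⟩
    have htri : geodesicDist v (f i) ≤ geodesicDist v (w i) + geodesicDist (w i) (f i) :=
      geodesicDist_triangle hv (hw_norm i) (hunit _ (hfP i))
    rw [hdist_vw] at htri
    rw [hαdef] at htri
    linarith [hfd i]
  have hf_inj : Function.Injective f := by
    intro i j hij
    by_contra hne
    have htri : geodesicDist (w i) (w j) ≤
        geodesicDist (w i) (f i) + geodesicDist (f i) (w j) :=
      geodesicDist_triangle (hw_norm i) (hunit _ (hfP i)) (hw_norm j)
    have h2 : geodesicDist (f i) (w j) = geodesicDist (w j) (f j) := by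
      rw [geodesicDist_comm, hij]
    rw [h2] at htri
    have hfar := hw_far i j hne
    have := hfd i
    have := hfd j
    rw [hαdef] at hfar
    linarith
  calc N = (Finset.univ : Finset (Fin N)).card := by simp
    _ ≤ (P.filter (fun p => geodesicDist v p ≤ θ / 2)).card :=
        Finset.card_le_card_of_injOn f (fun i _ => hf_mem i) (hf_inj.injOn)
end

section
/- For every integer N ≥ 3 and every real θ with 0 < θ ≤ π/2, there exists a finite set P of unit vectors in ℝ^N with cardinality |P| ≤ √(2πN) · (1/sin(θ/12))^(N−1), such that for every unit vector v ∈ ℝ^N at least N elements p of P satisfy ∠(v,p) ≤ θ/2; that is, every closed spherical cap of angular radius θ/2 in S^{N−1} contains at least N elements of P. -/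
open Real
open scoped Classical

section Aux

open MeasureTheory Metric
open scoped ENNReal

private lemma exists_orth_unit (N : ℕ) (hN : 2 ≤ N) (q : EuclideanSpace ℝ (Fin N)) :
    ∃ w : EuclideanSpace ℝ (Fin N), ‖w‖ = 1 ∧ (inner ℝ q w : ℝ) = 0 := by
  have hfr : Module.finrank ℝ (EuclideanSpace ℝ (Fin N)) = N := finrank_euclideanSpace_fin
  have hKbot : (ℝ ∙ q)ᗮ ≠ ⊥ := by
    intro h
    have htop : (ℝ ∙ q) = ⊤ := Submodule.orthogonal_eq_bot_iff.mp h
    have h1 : Module.finrank ℝ (ℝ ∙ q) ≤ 1 := by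
      rcases eq_or_ne q 0 with hq | hq
      · subst hq; rw [Submodule.span_zero_singleton]; simp
      · rw [finrank_span_singleton hq]
    rw [htop] at h1
    rw [finrank_top, hfr] at h1
    omega
  obtain ⟨w₀, hw₀mem, hw₀⟩ := Submodule.exists_mem_ne_zero_of_ne_bot hKbot
  refine ⟨‖w₀‖⁻¹ • w₀, norm_smul_inv_norm hw₀, ?_⟩
  have : (inner ℝ q w₀ : ℝ) = 0 := by
    have := (Submodule.mem_orthogonal _ w₀).mp hw₀mem q (Submodule.mem_span_singleton_self q)
    simpa using this
  rw [real_inner_smul_right, this, mul_zero]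

private lemma pow_sub_pow_le' (a b : ℝ) (hb : 0 ≤ b) (hab : b ≤ a) :
    ∀ n : ℕ, a ^ n - b ^ n ≤ n * (a - b) * a ^ (n - 1) := by
  intro n
  induction n with
  | zero => simp
  | succ m ih =>
    have ha : 0 ≤ a := hb.trans hab
    have hbm : b ^ m ≤ a ^ m := pow_le_pow_left₀ hb hab m
    have ham : a ^ m * a = a ^ (m+1) := (pow_succ a m).symm
    rcases Nat.eq_zero_or_pos m with hm | hm
    · subst hm; simp
    · have h1 : a ^ (m - 1) * a = a ^ m := by
        rw [← pow_succ]; congr 1; omega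
      have key : a ^ (m+1) - b ^ (m+1) = a * (a ^ m - b ^ m) + (a - b) * b ^ m := by
        rw [pow_succ, pow_succ]; ring
      rw [key]
      have h2 : a * (a ^ m - b ^ m) ≤ a * (m * (a - b) * a ^ (m-1)) :=
        mul_le_mul_of_nonneg_left ih ha
      have h3 : a * (m * (a - b) * a ^ (m-1)) = m * (a-b) * a ^ m := by
        rw [← h1]; ring
      have h4 : (a - b) * b ^ m ≤ (a - b) * a ^ m :=
        mul_le_mul_of_nonneg_left hbm (by linarith)
      have : (m+1 : ℕ) - 1 = m := by omega
      rw [this]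
      push_cast
      nlinarith

private lemma packing_card_bound_s11 (N : ℕ) (hN : 1 ≤ N) (r : ℝ) (hr0 : 0 < r) (hr1 : r ≤ 1)
    (Q : Finset (EuclideanSpace ℝ (Fin N)))
    (hunit : ∀ q ∈ Q, ‖q‖ = 1)
    (hsep : ∀ q ∈ Q, ∀ q' ∈ Q, q ≠ q' → 2 * r ≤ dist q q') :
    (Q.card : ℝ) * r ^ N + (1 - r) ^ N ≤ (1 + r) ^ N := by
  haveI : Nontrivial (EuclideanSpace ℝ (Fin N)) := by
    apply Module.nontrivial_of_finrank_pos (R := ℝ)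
    rw [finrank_euclideanSpace_fin]; omega
  have hfr : Module.finrank ℝ (EuclideanSpace ℝ (Fin N)) = N := finrank_euclideanSpace_fin
  set v := volume (ball (0:EuclideanSpace ℝ (Fin N)) 1) with hv
  have hball : ∀ q : EuclideanSpace ℝ (Fin N),
      volume (ball q r) = ENNReal.ofReal (r ^ N) * v := by
    intro q
    rw [Measure.addHaar_ball volume q hr0.le, hfr]
  have hdisj : (Q : Set (EuclideanSpace ℝ (Fin N))).PairwiseDisjoint (fun q => ball q r) := by
    intro q hq q' hq' hne
    exact ball_disjoint_ball (by
      have := hsep q hq q' hq' hne; linarith)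
  have hsum : volume (⋃ q ∈ Q, ball q r) = Q.card * (ENNReal.ofReal (r ^ N) * v) := by
    rw [measure_biUnion_finset hdisj (fun q _ => measurableSet_ball)]
    rw [Finset.sum_congr rfl (fun q _ => hball q), Finset.sum_const, nsmul_eq_mul]
  have hsub1 : (⋃ q ∈ Q, ball q r) ⊆ ball (0:EuclideanSpace ℝ (Fin N)) (1+r) := by
    intro x hx
    simp only [Set.mem_iUnion] at hx
    obtain ⟨q, hq, hxq⟩ := hx
    rw [mem_ball] at hxq ⊢
    have h1 : dist x (0:EuclideanSpace ℝ (Fin N)) ≤ dist x q + dist q 0 := dist_triangle _ _ _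
    have h2 : dist q (0:EuclideanSpace ℝ (Fin N)) = 1 := by
      rw [dist_zero_right]; exact hunit q hq
    linarith
  have hsub2 : Disjoint (closedBall (0:EuclideanSpace ℝ (Fin N)) (1-r)) (⋃ q ∈ Q, ball q r) := by
    rw [Set.disjoint_right]
    intro x hx hx'
    simp only [Set.mem_iUnion] at hx
    obtain ⟨q, hq, hxq⟩ := hx
    rw [mem_ball] at hxq
    rw [mem_closedBall, dist_zero_right] at hx'
    have h1 : dist q (0:EuclideanSpace ℝ (Fin N)) ≤ dist q x + dist x 0 := dist_triangle _ _ _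
    have h2 : ‖q‖ = 1 := hunit q hq
    rw [dist_comm q x] at h1
    simp only [dist_zero_right] at h1
    linarith
  have hunion : volume (closedBall (0:EuclideanSpace ℝ (Fin N)) (1-r)) + volume (⋃ q ∈ Q, ball q r)
      ≤ volume (ball (0:EuclideanSpace ℝ (Fin N)) (1+r)) := by
    rw [← measure_union hsub2 (MeasurableSet.biUnion Q.countable_toSet
      (fun q _ => measurableSet_ball))]
    apply measure_mono
    apply Set.union_subset _ hsub1
    intro x hx
    rw [mem_closedBall, dist_zero_right] at hx
    rw [mem_ball, dist_zero_right]
    linarith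
  have e1 : volume (ball (0:EuclideanSpace ℝ (Fin N)) (1+r)) = ENNReal.ofReal ((1+r) ^ N) * v := by
    rw [Measure.addHaar_ball volume _ (by positivity : (0:ℝ) ≤ 1 + r), hfr]
  have e2 : volume (closedBall (0:EuclideanSpace ℝ (Fin N)) (1-r))
      = ENNReal.ofReal ((1-r) ^ N) * v := by
    rw [Measure.addHaar_closedBall volume _ (by linarith : (0:ℝ) ≤ 1 - r), hfr]
  rw [hsum, e1, e2] at hunion
  have hvpos : v ≠ 0 := (measure_ball_pos volume (0:EuclideanSpace ℝ (Fin N)) one_pos).ne'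
  have hvtop : v ≠ ⊤ := measure_ball_lt_top.ne
  have key : ENNReal.ofReal ((1-r)^N) + (Q.card : ℝ≥0∞) * ENNReal.ofReal (r ^ N)
      ≤ ENNReal.ofReal ((1+r)^N) := by
    have h2 : (ENNReal.ofReal ((1-r)^N) + (Q.card : ℝ≥0∞) * ENNReal.ofReal (r ^ N)) * v
        ≤ ENNReal.ofReal ((1+r)^N) * v := by
      rw [add_mul, mul_assoc]; exact hunion
    exact (ENNReal.mul_le_mul_iff_left hvpos hvtop).mp h2
  have hcast : (Q.card : ℝ≥0∞) * ENNReal.ofReal (r ^ N) = ENNReal.ofReal (Q.card * r ^ N) := by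
    rw [ENNReal.ofReal_mul (Nat.cast_nonneg _)]
    congr 1
    simp
  rw [hcast, ← ENNReal.ofReal_add (pow_nonneg (by linarith) _) (by positivity)] at key
  have := (ENNReal.ofReal_le_ofReal_iff (pow_nonneg (by linarith) _)).mp key
  linarith

private lemma claimB' (N : ℕ) (hN : 3 ≤ N) : 2 * (N:ℝ)^3 ≤ π * (1681/400) ^ (N - 1) := by
  induction N with
  | zero => omega
  | succ m ih =>
    rcases Nat.lt_or_ge m 3 with hm | hm
    · interval_cases m
      · omega
      · omega
      · norm_num
        nlinarith [pi_gt_d6]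
    · have h3 : 3 ≤ m := hm
      have ih' := ih h3
      have hc : (3:ℝ) ≤ (m:ℝ) := by exact_mod_cast h3
      have hm2 : 3*(m:ℝ)^2 ≤ (m:ℝ)^3 := by nlinarith
      have hm1 : 3*(m:ℝ) ≤ (m:ℝ)^2 := by nlinarith
      have hstep : 2 * ((m:ℝ)+1)^3 ≤ (1681/400) * (2 * (m:ℝ)^3) := by nlinarith
      have hple : (0:ℝ) < (1681/400) ^ (m-1) := by positivity
      have hpow : ((1681:ℝ)/400)^m = (1681/400)^(m-1) * (1681/400) := by
        rw [← pow_succ]; congr 1; omega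
      push_cast
      rw [hpow]
      nlinarith [pi_pos]

private lemma claimB (N : ℕ) (hN : 3 ≤ N) :
    2 * (N:ℝ)^2 ≤ Real.sqrt (2 * π * N) * (41/20) ^ (N - 1) := by
  have h1 := claimB' N hN
  have hNpos : (0:ℝ) < N := by
    have : (3:ℝ) ≤ N := by exact_mod_cast hN
    linarith
  set c : ℝ := (41/20) ^ (N-1) with hc
  have hc0 : 0 ≤ c := by positivity
  have hcsq : c^2 = (1681/400) ^ (N-1) := by
    rw [hc, ← pow_mul, mul_comm (N-1) 2, pow_mul]; norm_num
  have key : (2*(N:ℝ)^2)^2 ≤ (2*π*N) * c^2 := by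
    rw [hcsq]
    have h2 : 2*(N:ℝ) * (2 * (N:ℝ)^3) ≤ 2*(N:ℝ) * (π * (1681/400) ^ (N - 1)) :=
      mul_le_mul_of_nonneg_left h1 (by linarith)
    nlinarith
  have hthis : 2*(N:ℝ)^2 ≤ Real.sqrt ((2*π*N) * c^2) :=
    Real.le_sqrt_of_sq_le key
  calc 2*(N:ℝ)^2 ≤ Real.sqrt ((2*π*N) * c^2) := hthis
    _ = Real.sqrt (2*π*N) * c := by
        rw [Real.sqrt_mul (by positivity), Real.sqrt_sq hc0]

private lemma claimA (θ : ℝ) (hθ : 0 < θ) (hθ2 : θ ≤ π/2) :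
    41 * Real.sin (θ/12) * (1 + Real.sin (θ/4 - θ^2/2000)) ≤ 20 * Real.sin (θ/4 - θ^2/2000) := by
  have hpi : π ≤ 3.1416 := by linarith [pi_lt_d6]
  have hθ157 : θ ≤ 1.5708 := by linarith
  obtain ⟨x, hx⟩ : ∃ x : ℝ, x = θ/4 - θ^2/2000 := ⟨_, rfl⟩
  rw [← hx]
  have hθθ : θ*θ ≤ 1.5708*θ := mul_le_mul_of_nonneg_right hθ157 hθ.le
  have hx0 : 0 < x := by nlinarith
  have hx1 : x ≤ 1 := by nlinarith
  have hxle : x ≤ θ/4 := by nlinarith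
  have hx3 : x^3 ≤ (θ/4)^3 := pow_le_pow_left₀ hx0.le hxle 3
  have hr_lb : x - x^3/4 < Real.sin x := by have := Real.sin_gt_sub_cube hx0; nlinarith [pow_pos hx0 3]
  have hr_ub : Real.sin x ≤ x := by
    have := Real.sin_lt hx0; linarith
  have hs_ub : Real.sin (θ/12) ≤ θ/12 := by
    have := Real.sin_lt (by linarith : 0 < θ/12); linarith
  have hs_pos : 0 < Real.sin (θ/12) := by
    apply Real.sin_pos_of_pos_of_lt_pi (by linarith)
    nlinarith [pi_gt_d6]
  have hr_pos : 0 < Real.sin x := by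
    apply Real.sin_pos_of_pos_of_lt_pi hx0
    nlinarith [pi_gt_d6]
  have hkey : 41*(θ/12)*(1 + θ/4) ≤ 20*(x - x^3/4) := by nlinarith
  have hprod : Real.sin (θ/12) * (1 + Real.sin x) ≤ (θ/12) * (1 + θ/4) := by
    apply mul_le_mul hs_ub (by linarith) (by linarith) (by linarith)
  nlinarith

end Aux

set_option maxHeartbeats 2000000 in
theorem exists_directions_striking_every_cap (N : ℕ) (hN : 3 ≤ N)
    (θ : ℝ) (hθ : 0 < θ) (hθ2 : θ ≤ π / 2) :
    ∃ P : Finset (EuclideanSpace ℝ (Fin N)),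
      (∀ p ∈ P, ‖p‖ = 1) ∧
      (P.card : ℝ) ≤ Real.sqrt (2 * π * N) * (1 / Real.sin (θ / 12)) ^ (N - 1) ∧
      ∀ v : EuclideanSpace ℝ (Fin N), ‖v‖ = 1 →
        N ≤ (P.filter (fun p => geodesicDist v p ≤ θ / 2)).card := by
  classical
  have hpi : π ≤ 3.1416 := by linarith [pi_lt_d6]
  have hpi2 : 3.1415 ≤ π := by linarith [pi_gt_d6]
  have hθ157 : θ ≤ 1.5708 := by linarith
  have hθθ : θ*θ ≤ 1.5708*θ := mul_le_mul_of_nonneg_right hθ157 hθ.le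
  obtain ⟨ε, hε⟩ : ∃ e : ℝ, e = θ^2/1000 := ⟨_, rfl⟩
  obtain ⟨δ, hδ⟩ : ∃ d : ℝ, d = θ/2 - ε := ⟨_, rfl⟩
  have hε0 : 0 < ε := by rw [hε]; positivity
  have hεθ : ε ≤ 0.0015708 * θ := by rw [hε]; nlinarith
  have hδ0 : 0 < δ := by rw [hδ, hε]; nlinarith
  have hδθ : δ ≤ θ/2 := by rw [hδ]; linarith
  have hδε : δ + ε = θ/2 := by rw [hδ]; ring
  have hδpi : δ ≤ π/4 := by linarith
  have hεpi : ε < π/2 := by nlinarith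
  -- r := sin (δ/2)
  obtain ⟨r, hr⟩ : ∃ r : ℝ, r = Real.sin (δ/2) := ⟨_, rfl⟩
  have hr0 : 0 < r := by
    rw [hr]; apply Real.sin_pos_of_pos_of_lt_pi (by linarith); nlinarith
  have hr1 : r ≤ 1 := by rw [hr]; exact Real.sin_le_one _
  -- the separated set predicate
  set Sep : Finset (EuclideanSpace ℝ (Fin N)) → Prop := fun Q =>
    (∀ q ∈ Q, ‖q‖ = 1) ∧
    (∀ q ∈ Q, ∀ q' ∈ Q, q ≠ q' → (inner ℝ q q' : ℝ) ≤ Real.cos δ) with hSep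
  have hsepdist : ∀ Q, Sep Q → ∀ q ∈ Q, ∀ q' ∈ Q, q ≠ q' → 2 * r ≤ dist q q' := by
    intro Q hQ q hq q' hq' hne
    have h1 : ‖q - q'‖^2 = ‖q‖^2 - 2 * (inner ℝ q q' : ℝ) + ‖q'‖^2 := norm_sub_sq_real q q'
    rw [hQ.1 q hq, hQ.1 q' hq'] at h1
    have h2 : (inner ℝ q q' : ℝ) ≤ Real.cos δ := hQ.2 q hq q' hq' hne
    have h3 : r^2 = 1/2 - Real.cos δ / 2 := by
      rw [hr]
      have := Real.sin_sq_eq_half_sub (δ/2)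
      rw [show 2 * (δ/2) = δ by ring] at this
      exact this
    have h4 : (2*r)^2 ≤ ‖q - q'‖^2 := by nlinarith
    have h5 : dist q q' = ‖q - q'‖ := dist_eq_norm q q'
    nlinarith [norm_nonneg (q - q'), hr0]
  have hcardR : ∀ Q, Sep Q → (Q.card : ℝ) * r ^ N + (1-r) ^ N ≤ (1+r) ^ N := by
    intro Q hQ
    exact packing_card_bound_s11 N (by omega) r hr0 hr1 Q hQ.1 (hsepdist Q hQ)
  -- uniform nat bound
  obtain ⟨B, hB⟩ : ∃ B : ℕ, ∀ Q, Sep Q → Q.card ≤ B := by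
    refine ⟨Nat.ceil (((1+r)/r)^N), fun Q hQ => ?_⟩
    have h1 := hcardR Q hQ
    have h2 : (Q.card : ℝ) ≤ ((1+r)/r)^N := by
      rw [div_pow]
      rw [le_div_iff₀ (by positivity)]
      nlinarith [pow_nonneg (by linarith : (0:ℝ) ≤ 1 - r) N, pow_pos hr0 N]
    exact_mod_cast h2.trans (Nat.le_ceil _)
  -- maximal separated set
  have hcos1 : Real.cos δ < 1 := by
    have := Real.cos_lt_cos_of_nonneg_of_le_pi (le_refl 0) (by linarith) hδ0
    rwa [Real.cos_zero] at this
  set Pn : ℕ → Prop := fun n => ∃ Q, Sep Q ∧ Q.card = n with hPn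
  have h0 : Pn 0 := ⟨∅, ⟨by simp, by simp⟩, rfl⟩
  obtain ⟨Q, hQsep, hQcard⟩ : Pn (Nat.findGreatest Pn B) :=
    Nat.findGreatest_spec (Nat.zero_le B) h0
  have hQcover : ∀ v : EuclideanSpace ℝ (Fin N), ‖v‖ = 1 →
      ∃ q ∈ Q, Real.cos δ ≤ (inner ℝ v q : ℝ) := by
    intro v hv
    by_contra hcon
    push_neg at hcon
    have hvQ : v ∉ Q := by
      intro hvQ
      have := hcon v hvQ
      rw [real_inner_self_eq_norm_sq, hv] at this
      norm_num at this
      linarith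
    have hsep' : Sep (insert v Q) := by
      constructor
      · intro q hq
        rcases Finset.mem_insert.mp hq with h | h
        · subst h; exact hv
        · exact hQsep.1 q h
      · intro q hq q' hq' hne
        rcases Finset.mem_insert.mp hq with h | h <;>
          rcases Finset.mem_insert.mp hq' with h' | h'
        · subst h; subst h'; exact absurd rfl hne
        · subst h; exact (hcon q' h').le
        · subst h'; rw [real_inner_comm]; exact (hcon q h).le
        · exact hQsep.2 q h q' h' hne
    have hcard' : (insert v Q).card = Nat.findGreatest Pn B + 1 := by
      rw [Finset.card_insert_of_notMem hvQ, hQcard]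
    have hle : Nat.findGreatest Pn B + 1 ≤ B := by
      have := hB _ hsep'
      omega
    have hPn1 : Pn (Nat.findGreatest Pn B + 1) := by
      rw [hPn]; exact ⟨insert v Q, hsep', hcard'⟩
    have := Nat.le_findGreatest hle hPn1
    omega
  -- orthogonal unit vectors
  choose w hw1 hw2 using (fun q : EuclideanSpace ℝ (Fin N) => exists_orth_unit N (by omega) q)
  -- cluster parameters
  have hNR : (0:ℝ) < N := by
    have : (3:ℝ) ≤ N := by exact_mod_cast hN
    linarith
  obtain ⟨τ, hτ⟩ : ∃ t : ℝ, t = Real.sin δ * Real.sin ε / N := ⟨_, rfl⟩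
  have hsinδ : 0 < Real.sin δ := by
    apply Real.sin_pos_of_pos_of_lt_pi hδ0; nlinarith
  have hsinε : 0 < Real.sin ε := by
    apply Real.sin_pos_of_pos_of_lt_pi hε0; nlinarith
  have hsinεle : Real.sin ε ≤ ε := by
    have := Real.sin_lt hε0; linarith
  have hτ0 : 0 < τ := by rw [hτ]; positivity
  have hτN : (N:ℝ) * τ = Real.sin δ * Real.sin ε := by
    rw [hτ]; field_simp
  have huε : Real.sin δ * Real.sin ε ≤ ε := by
    calc Real.sin δ * Real.sin ε ≤ 1 * Real.sin ε :=
          mul_le_mul_of_nonneg_right (Real.sin_le_one δ) hsinε.le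
      _ = Real.sin ε := one_mul _
      _ ≤ ε := hsinεle
  -- cluster map
  set f : EuclideanSpace ℝ (Fin N) → ℕ → EuclideanSpace ℝ (Fin N) := fun q k =>
    Real.cos ((k+1)*τ) • q + Real.sin ((k+1)*τ) • w q with hf
  -- basic properties of t-values
  have htval : ∀ k : ℕ, k < N → 0 < ((k:ℝ)+1)*τ ∧ ((k:ℝ)+1)*τ ≤ Real.sin δ * Real.sin ε := by
    intro k hk
    constructor
    · positivity
    · have : (k:ℝ)+1 ≤ N := by
        have : (k:ℕ)+1 ≤ N := hk
        exact_mod_cast this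
      calc ((k:ℝ)+1)*τ ≤ (N:ℝ)*τ := by nlinarith
        _ = Real.sin δ * Real.sin ε := hτN
  -- inner products with cluster points
  have hinner : ∀ (q : EuclideanSpace ℝ (Fin N)) (k : ℕ) (v : EuclideanSpace ℝ (Fin N)),
      (inner ℝ v (f q k) : ℝ)
        = Real.cos (((k:ℝ)+1)*τ) * (inner ℝ v q : ℝ) + Real.sin (((k:ℝ)+1)*τ) * (inner ℝ v (w q) : ℝ) := by
    intro q k v
    rw [hf]
    simp only [inner_add_right, real_inner_smul_right]
  have hunit_f : ∀ q : EuclideanSpace ℝ (Fin N), ‖q‖ = 1 → ∀ k : ℕ, ‖f q k‖ = 1 := by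
    intro q hq k
    have h1 : ‖f q k‖^2 = 1 := by
      rw [hf]
      simp only
      rw [norm_add_sq_real]
      rw [norm_smul, norm_smul, real_inner_smul_left, real_inner_smul_right, hw2 q, hq, hw1 q]
      simp only [Real.norm_eq_abs, mul_one, mul_zero]
      nlinarith [Real.sin_sq_add_cos_sq (((k:ℝ)+1)*τ), sq_abs (Real.cos (((k:ℝ)+1)*τ)),
        sq_abs (Real.sin (((k:ℝ)+1)*τ))]
    nlinarith [norm_nonneg (f q k)]
  have hinner_self : ∀ (q : EuclideanSpace ℝ (Fin N)), ‖q‖ = 1 → ∀ k : ℕ,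
      (inner ℝ q (f q k) : ℝ) = Real.cos (((k:ℝ)+1)*τ) := by
    intro q hq k
    rw [hinner q k q, real_inner_self_eq_norm_sq, hq, hw2 q]
    simp
  -- the final point set
  set P : Finset (EuclideanSpace ℝ (Fin N)) :=
    Q.biUnion (fun q => (Finset.range N).image (f q)) with hP
  have hPunit : ∀ p ∈ P, ‖p‖ = 1 := by
    intro p hp
    rw [hP, Finset.mem_biUnion] at hp
    obtain ⟨q, hq, hp⟩ := hp
    rw [Finset.mem_image] at hp
    obtain ⟨k, _, rfl⟩ := hp
    exact hunit_f q (hQsep.1 q hq) k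
  refine ⟨P, hPunit, ?_, ?_⟩
  · -- cardinality bound
    have hPcard : P.card ≤ Q.card * N := by
      rw [hP]
      calc (Q.biUnion (fun q => (Finset.range N).image (f q))).card
          ≤ ∑ q ∈ Q, ((Finset.range N).image (f q)).card := Finset.card_biUnion_le
        _ ≤ ∑ q ∈ Q, N := Finset.sum_le_sum (fun q _ =>
            (Finset.card_image_le).trans (by rw [Finset.card_range]))
        _ = Q.card * N := by rw [Finset.sum_const, smul_eq_mul]
    -- real bound
    have hs_pos : 0 < Real.sin (θ/12) := by
      apply Real.sin_pos_of_pos_of_lt_pi (by linarith)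
      nlinarith
    set s : ℝ := Real.sin (θ/12) with hs
    have hA : 41 * s * (1 + r) ≤ 20 * r := by
      have h := claimA θ hθ hθ2
      have harg : θ/4 - θ^2/2000 = δ/2 := by rw [hδ, hε]; ring
      rw [harg] at h
      rw [hs, hr]
      exact h
    have hA' : 1 + r ≤ 20/(41*s) * r := by
      rw [div_mul_eq_mul_div, le_div_iff₀ (by positivity)]
      nlinarith
    have hQr : (Q.card : ℝ) * r ^ N ≤ 2 * N * r * (1+r)^(N-1) := by
      have h1 := hcardR Q hQsep
      have h2 := pow_sub_pow_le' (1+r) (1-r) (by linarith) (by linarith) N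
      have h3 : (1+r) - (1-r) = 2*r := by ring
      rw [h3] at h2
      nlinarith [pow_nonneg (by linarith : (0:ℝ) ≤ 1-r) N]
    have hrNsplit : r ^ N = r ^ (N-1) * r := by
      rw [← pow_succ]; congr 1; omega
    have hQ2 : (Q.card : ℝ) * r^N ≤ (2*N*(20/(41*s))^(N-1)) * r^N := by
      have hp1 : (1+r)^(N-1) ≤ (20/(41*s)*r)^(N-1) := pow_le_pow_left₀ (by linarith) hA' _
      have hp2 : (20/(41*s)*r)^(N-1) = (20/(41*s))^(N-1)*r^(N-1) := mul_pow _ _ _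
      calc (Q.card : ℝ) * r^N ≤ 2*N*r*(1+r)^(N-1) := hQr
        _ ≤ 2*N*r*((20/(41*s))^(N-1)*r^(N-1)) := by
            rw [← hp2]
            exact mul_le_mul_of_nonneg_left hp1 (by positivity)
        _ = (2*N*(20/(41*s))^(N-1)) * r^N := by rw [hrNsplit]; ring
    have hQ3 : (Q.card : ℝ) ≤ 2*N*(20/(41*s))^(N-1) :=
      le_of_mul_le_mul_right hQ2 (pow_pos hr0 N)
    have hfin : (P.card : ℝ) ≤ 2*(N:ℝ)^2*(20/(41*s))^(N-1) := by
      have hP1 : (P.card : ℝ) ≤ (Q.card : ℝ) * N := by exact_mod_cast hPcard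
      calc (P.card : ℝ) ≤ (Q.card : ℝ) * N := hP1
        _ ≤ (2*N*(20/(41*s))^(N-1)) * N := mul_le_mul_of_nonneg_right hQ3 (by positivity)
        _ = 2*(N:ℝ)^2*(20/(41*s))^(N-1) := by ring
    have hsplit2 : (20/(41*s))^(N-1) = (20/41)^(N-1) * (1/s)^(N-1) := by
      rw [← mul_pow]
      congr 1
      field_simp
    have hcb := claimB N hN
    have hmul : 2*(N:ℝ)^2*((20:ℝ)/41)^(N-1) ≤ Real.sqrt (2*π*N) := by
      have h := mul_le_mul_of_nonneg_right hcb
        (pow_nonneg (by norm_num : (0:ℝ) ≤ 20/41) (N-1))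
      have hone : ((41:ℝ)/20)^(N-1)*((20:ℝ)/41)^(N-1) = 1 := by
        rw [← mul_pow]; norm_num
      calc 2*(N:ℝ)^2*((20:ℝ)/41)^(N-1) ≤ Real.sqrt (2*π*N)*(41/20)^(N-1)*((20:ℝ)/41)^(N-1) := h
        _ = Real.sqrt (2*π*N) := by rw [mul_assoc, hone, mul_one]
    calc (P.card : ℝ) ≤ 2*(N:ℝ)^2*(20/(41*s))^(N-1) := hfin
      _ = (2*(N:ℝ)^2*((20:ℝ)/41)^(N-1)) * (1/s)^(N-1) := by rw [hsplit2]; ring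
      _ ≤ Real.sqrt (2*π*N) * (1/s)^(N-1) :=
          mul_le_mul_of_nonneg_right hmul (by positivity)
  · -- covering with multiplicity N
    intro v hv
    obtain ⟨q, hqQ, hqv⟩ := hQcover v hv
    have hcosδ0 : 0 ≤ Real.cos δ := Real.cos_nonneg_of_mem_Icc ⟨by linarith, by linarith⟩
    -- each cluster point of q is within θ/2 of v
    have hclose : ∀ k ∈ Finset.range N, geodesicDist v (f q k) ≤ θ/2 := by
      intro k hk
      rw [Finset.mem_range] at hk
      obtain ⟨ht0, htle⟩ := htval k hk
      have htε : ((k:ℝ)+1)*τ ≤ ε := le_trans htle huε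
      have hsin_t : Real.sin (((k:ℝ)+1)*τ) ≤ Real.sin δ * Real.sin ε := by
        have := Real.sin_lt ht0
        linarith
      have hsin_t0 : 0 ≤ Real.sin (((k:ℝ)+1)*τ) := by
        apply Real.sin_nonneg_of_nonneg_of_le_pi ht0.le
        nlinarith
      have hcos_t : Real.cos ε ≤ Real.cos (((k:ℝ)+1)*τ) :=
        Real.cos_le_cos_of_nonneg_of_le_pi ht0.le (by nlinarith) htε
      have hcos_t0 : 0 ≤ Real.cos (((k:ℝ)+1)*τ) := by
        apply Real.cos_nonneg_of_mem_Icc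
        constructor <;> nlinarith
      have hw_lb : -1 ≤ (inner ℝ v (w q) : ℝ) := by
        have := abs_real_inner_le_norm v (w q)
        rw [hv, hw1 q] at this
        rw [abs_le] at this
        linarith [this.1]
      have hvq1 : (inner ℝ v q : ℝ) ≤ 1 := by
        have := real_inner_le_norm v q
        rw [hv, hQsep.1 q hqQ] at this
        linarith
      have hip : Real.cos (θ/2) ≤ (inner ℝ v (f q k) : ℝ) := by
        rw [hinner q k v]
        have h1 : Real.cos (((k:ℝ)+1)*τ) * Real.cos δ ≤ Real.cos (((k:ℝ)+1)*τ) * (inner ℝ v q : ℝ) :=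
          mul_le_mul_of_nonneg_left hqv hcos_t0
        have h2 : Real.cos ε * Real.cos δ ≤ Real.cos (((k:ℝ)+1)*τ) * Real.cos δ :=
          mul_le_mul_of_nonneg_right hcos_t hcosδ0
        have h3 : -(Real.sin δ * Real.sin ε) ≤ Real.sin (((k:ℝ)+1)*τ) * (inner ℝ v (w q) : ℝ) := by
          nlinarith
        have h4 : Real.cos (θ/2) = Real.cos δ * Real.cos ε - Real.sin δ * Real.sin ε := by
          rw [← hδε, Real.cos_add]
        nlinarith
      -- conclude via arccos
      show Real.arccos (inner ℝ v (f q k) : ℝ) ≤ θ/2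
      have harc : Real.arccos (inner ℝ v (f q k) : ℝ) ≤ Real.arccos (Real.cos (θ/2)) := by
        rw [Real.arccos, Real.arccos]
        have := Real.monotone_arcsin hip
        linarith
      rwa [Real.arccos_cos (by linarith) (by linarith)] at harc
    -- the N cluster points are distinct
    have hinj : Set.InjOn (f q) (Finset.range N : Set ℕ) := by
      intro k hk j hj hkj
      simp only [Finset.coe_range, Set.mem_Iio] at hk hj
      have h1 : (inner ℝ q (f q k) : ℝ) = (inner ℝ q (f q j) : ℝ) := by rw [hkj]
      rw [hinner_self q (hQsep.1 q hqQ) k, hinner_self q (hQsep.1 q hqQ) j] at h1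
      have hk' := htval k hk
      have hj' := htval j hj
      have heq : ((k:ℝ)+1)*τ = ((j:ℝ)+1)*τ := by
        apply Real.injOn_cos ⟨hk'.1.le, by nlinarith⟩ ⟨hj'.1.le, by nlinarith⟩ h1
      have h2 : ((k:ℝ)+1) = ((j:ℝ)+1) := mul_right_cancel₀ hτ0.ne' heq
      have h3 : (k:ℝ) = j := by linarith
      exact_mod_cast h3
    -- count
    have hsub : (Finset.range N).image (f q) ⊆ P.filter (fun p => geodesicDist v p ≤ θ/2) := by
      intro p hp
      rw [Finset.mem_image] at hp
      obtain ⟨k, hk, rfl⟩ := hp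
      rw [Finset.mem_filter]
      constructor
      · rw [hP, Finset.mem_biUnion]
        exact ⟨q, hqQ, Finset.mem_image_of_mem _ hk⟩
      · exact hclose k hk
    calc N = ((Finset.range N).image (f q)).card := by
          rw [Finset.card_image_of_injOn hinj, Finset.card_range]
      _ ≤ (P.filter (fun p => geodesicDist v p ≤ θ/2)).card := Finset.card_le_card hsub
end
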